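/- arXiv:0708.0138 — 4 statements merged into one kernel-verified Lean document; each statement's English description precedes it below -/
import Mathlib

section
/- Under the Malthusian hypotheses, for the cascade started from x = 1 there exists p > 1 such that E[(sup_{u∈𝒰} ξ_u^{p_0})^p] < ∞; in particular sup_{u∈𝒰} ξ_u^{p_0} belongs to L^p(P) and is finite almost surely. -/
open MeasureTheory ProbabilityTheory Filter Real
open scoped ENNReal NNReal Topology

/-- Representation space for finite point measures on `(0,∞)`: a point measure `s`
is identified with the sequence `(s 0, s 1, …)` of its atoms followed by zeros. -/
abbrev PMSeq : Type := ℕ → ℝ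

/-- `s` is a genuine representation of a finite point measure: all entries are
nonnegative and the nonzero entries (the atoms) are exactly those of index `< n`
for some `n`. -/
def IsPointSeq (s : PMSeq) : Prop :=
  (∀ i, 0 ≤ s i) ∧ ∃ n : ℕ, ∀ i, s i ≠ 0 ↔ i < n

/-- The number `#s` of atoms of `s`. -/
noncomputable def numAtoms (s : PMSeq) : ℕ := Nat.card {i : ℕ // s i ≠ 0}

/-- `⟨x^p, s⟩ = ∑_{i=1}^{#s} s_i ^ p`, valued in `[0,∞]`. -/
noncomputable def powSum (p : ℝ) (s : PMSeq) : ℝ≥0∞ :=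
  ∑' i : ℕ, if s i = 0 then 0 else ENNReal.ofReal (s i ^ p)

/-- `Λ(p) = ∫ ⟨x^p, s⟩ ν(ds) ∈ [0,∞]`. -/
noncomputable def Lam (ν : Measure PMSeq) (p : ℝ) : ℝ≥0∞ := ∫⁻ s, powSum p s ∂ν

/-- `κ(p) = 1 - Λ(p)` (junk value when `Λ(p) = ∞`). -/
noncomputable def kappa (ν : Measure PMSeq) (p : ℝ) : ℝ := 1 - (Lam ν p).toReal

/-- `p̲ = inf {p : Λ(p) < ∞}`, as an extended real. -/
noncomputable def pLow (ν : Measure PMSeq) : EReal :=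
  sInf {x : EReal | ∃ p : ℝ, x = ↑p ∧ Lam ν p < ⊤}

/-- `p_∞ = inf {p > p̲ : Λ(p) = ∞}`, as an extended real (`⊤` if no such `p`). -/
noncomputable def pInfty (ν : Measure PMSeq) : EReal :=
  sInf {x : EReal | ∃ p : ℝ, x = ↑p ∧ pLow ν < ↑p ∧ Lam ν p = ⊤}

/-- `p ∈ (p̲, p_∞)`. -/
def InDomain (ν : Measure PMSeq) (p : ℝ) : Prop := pLow ν < ↑p ∧ ↑p < pInfty ν

/-- `p₀` is the Malthusian exponent: the smallest solution of `κ(p) = 0`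
(equivalently `Λ(p) = 1`) on `(p̲, p_∞)`. -/
def IsMalthusian (ν : Measure PMSeq) (p₀ : ℝ) : Prop :=
  InDomain ν p₀ ∧ Lam ν p₀ = 1 ∧ ∀ q : ℝ, InDomain ν q → Lam ν q = 1 → p₀ ≤ q

/-- The Malthusian hypotheses: the Malthusian exponent `p₀` exists, is positive,
`κ(p) > 0` for some `p > p₀`, and `∫ ⟨x^{p₀}, s⟩^p ν(ds) < ∞` for some `p > 1`. -/
def MalthusHyp (ν : Measure PMSeq) (p₀ : ℝ) : Prop :=
  IsMalthusian ν p₀ ∧ 0 < p₀ ∧ (∃ p : ℝ, p₀ < p ∧ InDomain ν p ∧ Lam ν p < 1) ∧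
    ∃ p : ℝ, 1 < p ∧ ∫⁻ s, powSum p₀ s ^ p ∂ν < ⊤
variable {Ω : Type*}

/-- The multiplicative cascade built from the i.i.d. marks `R`: `ξ_∅ = x` and
`ξ_{ui} = R_u(i) · ξ_u`; explicitly `ξ_u = x ∏_{k<|u|} R_{u|k}(u_k)`. -/
noncomputable def xi (R : List ℕ → Ω → ℕ → ℝ) (x : ℝ) (u : List ℕ) (ω : Ω) : ℝ :=
  x * ∏ k ∈ Finset.range u.length, R (u.take k) ω (u.getD k 0)

/-- `M_n^{(p)} = ∑_{|u|=n} ξ_u^p` (summing over individuals of positive size). -/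
noncomputable def genSum (R : List ℕ → Ω → ℕ → ℝ) (x p : ℝ) (n : ℕ) (ω : Ω) : ℝ :=
  ∑' u : {u : List ℕ // u.length = n}, if xi R x u ω = 0 then 0 else xi R x u ω ^ p

/-- The filtration `H_n = σ(R_v : |v| < n)`. -/
noncomputable def cascadeFilt [m0 : MeasurableSpace Ω] (R : List ℕ → Ω → ℕ → ℝ)
    (hR : ∀ u, Measurable (R u)) : Filtration ℕ m0 where
  seq n := ⨆ (v : List ℕ) (_ : v.length < n), MeasurableSpace.comap (R v) inferInstance
  mono' m n hmn := by
    refine iSup₂_le fun v hv => ?_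
    exact le_iSup₂ (f := fun (v : List ℕ) (_ : v.length < n) =>
      MeasurableSpace.comap (R v) inferInstance) v (hv.trans_le hmn)
  le' n := iSup₂_le fun v _ => measurable_iff_comap_le.mp (hR v)


/-- Auxiliary: the expectation of a product of finitely many independent
`ℝ≥0∞`-valued random variables is the product of the expectations. -/
lemma lintegral_prod_iIndep {Ω' ι : Type*} [MeasurableSpace Ω'] {P : Measure Ω'}
    [IsProbabilityMeasure P]
    {f : ι → Ω' → ℝ≥0∞} (hmeas : ∀ i, Measurable (f i))
    (hindep : iIndepFun f P) (s : Finset ι) :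
    ∫⁻ ω, ∏ i ∈ s, f i ω ∂P = ∏ i ∈ s, ∫⁻ ω, f i ω ∂P := by
  classical
  induction s using Finset.induction_on with
  | empty => simp
  | @insert a s ha ih =>
    have hps : Measurable (fun ω => ∏ i ∈ s, f i ω) :=
      Finset.measurable_prod _ fun i _ => hmeas i
    have hind : IndepFun (fun ω => ∏ i ∈ s, f i ω) (f a) P := by
      have h := hindep.indepFun_finsetProd_of_notMem hmeas ha
      have : (∏ j ∈ s, f j) = fun ω => ∏ i ∈ s, f i ω := by
        funext ω; simp [Finset.prod_apply]
      rwa [this] at h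
    calc ∫⁻ ω, ∏ i ∈ insert a s, f i ω ∂P
        = ∫⁻ ω, ((fun ω => ∏ i ∈ s, f i ω) * f a) ω ∂P := by
          refine lintegral_congr fun ω => ?_
          rw [Finset.prod_insert ha, Pi.mul_apply, mul_comm]
      _ = (∫⁻ ω, ∏ i ∈ s, f i ω ∂P) * ∫⁻ ω, f a ω ∂P :=
          lintegral_mul_eq_lintegral_mul_lintegral_of_indepFun hps (hmeas a) hind
      _ = ∏ i ∈ insert a s, ∫⁻ ω, f i ω ∂P := by
          rw [ih, Finset.prod_insert ha, mul_comm]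

/-- Auxiliary: the sum over all `n`-tuples of products equals the `n`-th power
of the sum. -/
lemma tsum_fin_prod (f : ℕ → ℝ≥0∞) : ∀ n : ℕ,
    ∑' v : Fin n → ℕ, ∏ k, f (v k) = (∑' i, f i) ^ n
  | 0 => by
    rw [tsum_eq_single (default : Fin 0 → ℕ)
      (fun b hb => absurd (Subsingleton.elim b default) hb)]
    simp
  | (n + 1) => by
    rw [← Equiv.tsum_eq (Fin.consEquiv fun _ => ℕ)
      (fun v : Fin (n + 1) → ℕ => ∏ k, f (v k))]
    have hcons : ∀ (a : ℕ) (v : Fin n → ℕ),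
        (∏ k, f ((Fin.cons a v : Fin (n + 1) → ℕ) k)) = f a * ∏ k, f (v k) := by
      intro a v
      rw [Fin.prod_univ_succ]
      simp
    calc ∑' q : ℕ × (Fin n → ℕ), ∏ k, f ((Fin.consEquiv fun _ => ℕ) q k)
        = ∑' (a : ℕ) (v : Fin n → ℕ), f a * ∏ k, f (v k) := by
          rw [ENNReal.tsum_prod']
          refine tsum_congr fun a => tsum_congr fun v => ?_
          simpa using hcons a v
      _ = (∑' i, f i) * (∑' v : Fin n → ℕ, ∏ k, f (v k)) := by
          simp_rw [ENNReal.tsum_mul_left]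
          rw [ENNReal.tsum_mul_right]
      _ = (∑' i, f i) ^ (n + 1) := by
          rw [tsum_fin_prod f n, pow_succ, mul_comm]

/-- Under the Malthusian hypotheses, for the cascade started
from `1`, there is `p > 1` with `E[(sup_u ξ_u^{p₀})^p] < ∞`; in particular
`sup_u ξ_u^{p₀}` is in `L^p(P)` and is finite almost surely. -/
theorem stmt9 {Ω : Type*} [MeasurableSpace Ω] (P : Measure Ω) [IsProbabilityMeasure P]
    (ν : Measure PMSeq) [IsProbabilityMeasure ν] (hν : ∀ᵐ s ∂ν, IsPointSeq s)
    (R : List ℕ → Ω → ℕ → ℝ) (hRmeas : ∀ u, Measurable (R u))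
    (hRindep : iIndepFun R P)
    (hRdist : ∀ u, Measure.map (R u) P = ν)
    (p₀ : ℝ) (hmal : MalthusHyp ν p₀) :
    ∃ p : ℝ, 1 < p ∧
      ∫⁻ ω, (⨆ u : List ℕ, ENNReal.ofReal (xi R 1 u ω ^ p₀)) ^ p ∂P < ⊤ ∧
      ∀ᵐ ω ∂P, (⨆ u : List ℕ, ENNReal.ofReal (xi R 1 u ω ^ p₀)) < ⊤ := by
  classical
  obtain ⟨hIsMal, hp₀pos, ⟨q, hq_gt, hqdom, hΛq⟩, -⟩ := hmal
  have hq_pos : 0 < q := hp₀pos.trans hq_gt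
  set p : ℝ := q / p₀ with hp_def
  have hp1 : 1 < p := (one_lt_div hp₀pos).mpr hq_gt
  have hp_pos : 0 < p := one_pos.trans hp1
  have hpq : p₀ * p = q := by
    rw [hp_def]; field_simp
  -- measurability facts
  have hxi_meas : ∀ u : List ℕ, Measurable (xi R 1 u) := by
    intro u
    unfold xi
    exact measurable_const.mul <| Finset.measurable_prod _ fun k _ =>
      (measurable_pi_apply _).comp (hRmeas _)
  have hg_meas : ∀ i : ℕ, Measurable fun y : PMSeq => ENNReal.ofReal (y i ^ q) :=
    fun i => ((Real.continuous_rpow_const hq_pos.le).measurable.comp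
      (measurable_pi_apply i)).ennreal_ofReal
  have hxiq_meas : ∀ u : List ℕ,
      Measurable fun ω => ENNReal.ofReal (xi R 1 u ω ^ q) := fun u =>
    ((Real.continuous_rpow_const hq_pos.le).measurable.comp (hxi_meas u)).ennreal_ofReal
  -- a.s. nonnegativity of all the marks
  have hae : ∀ᵐ ω ∂P, ∀ (v : List ℕ) (i : ℕ), 0 ≤ R v ω i := by
    rw [ae_all_iff]
    intro v
    rw [ae_all_iff]
    intro i
    have h1 : ∀ᵐ s ∂ν, 0 ≤ s i := hν.mono fun s hs => hs.1 i
    have h2 : ∀ᵐ y ∂(Measure.map (R v) P), 0 ≤ y i := by rwa [hRdist v]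
    exact (MeasureTheory.ae_map_iff (hRmeas v).aemeasurable
      (measurableSet_le measurable_const (measurable_pi_apply i))).mp h2
  -- the one-generation weights
  set f : ℕ → ℝ≥0∞ := fun i => ∫⁻ s, ENNReal.ofReal (s i ^ q) ∂ν with hf_def
  have hLam_eq : Lam ν q = ∑' i, f i := by
    rw [Lam]
    have hps : ∀ s : PMSeq, powSum q s = ∑' i, ENNReal.ofReal (s i ^ q) := by
      intro s
      unfold powSum
      refine tsum_congr fun i => ?_
      split_ifs with h
      · simp [h, Real.zero_rpow hq_pos.ne']
      · rfl
    simp_rw [hps]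
    rw [lintegral_tsum fun i => (hg_meas i).aemeasurable]
  -- the key per-individual computation
  have key : ∀ u : List ℕ,
      ∫⁻ ω, ENNReal.ofReal (xi R 1 u ω ^ q) ∂P
        = ∏ k ∈ Finset.range u.length, f (u.getD k 0) := by
    intro u
    set n := u.length with hn
    set F : List ℕ → Ω → ℝ≥0∞ :=
      fun v ω => ENNReal.ofReal ((R v ω (u.getD v.length 0)) ^ q) with hF
    have hF_meas : ∀ v, Measurable (F v) :=
      fun v => (hg_meas (u.getD v.length 0)).comp (hRmeas v)
    have hF_indep : iIndepFun F P :=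
      hRindep.comp (fun v y => ENNReal.ofReal ((y (u.getD v.length 0)) ^ q))
        (fun v => hg_meas _)
    have htake_len : ∀ k ∈ Finset.range n, (u.take k).length = k := by
      intro k hk
      rw [List.length_take]
      exact min_eq_left (Finset.mem_range.mp hk).le
    have hinj : ∀ a ∈ Finset.range n, ∀ b ∈ Finset.range n,
        u.take a = u.take b → a = b := by
      intro a ha b hb hab
      have h := congrArg List.length hab
      rwa [htake_len a ha, htake_len b hb] at h
    have step1 : ∀ᵐ ω ∂P, ENNReal.ofReal (xi R 1 u ω ^ q)
        = ∏ k ∈ Finset.range n, F (u.take k) ω := by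
      filter_upwards [hae] with ω hω
      have hterm : ∀ k ∈ Finset.range n, 0 ≤ R (u.take k) ω (u.getD k 0) :=
        fun k _ => hω _ _
      rw [xi, one_mul, ← Real.finset_prod_rpow _ _ hterm q,
        ENNReal.ofReal_prod_of_nonneg
          (fun k hk => Real.rpow_nonneg (hterm k hk) q)]
      refine Finset.prod_congr rfl fun k hk => ?_
      simp only [hF]
      rw [htake_len k hk]
    calc ∫⁻ ω, ENNReal.ofReal (xi R 1 u ω ^ q) ∂P
        = ∫⁻ ω, ∏ k ∈ Finset.range n, F (u.take k) ω ∂P := lintegral_congr_ae step1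
      _ = ∫⁻ ω, ∏ v ∈ (Finset.range n).image (u.take ·), F v ω ∂P := by
          refine lintegral_congr fun ω => ?_
          rw [Finset.prod_image hinj]
      _ = ∏ v ∈ (Finset.range n).image (u.take ·), ∫⁻ ω, F v ω ∂P :=
          lintegral_prod_iIndep hF_meas hF_indep _
      _ = ∏ k ∈ Finset.range n, ∫⁻ ω, F (u.take k) ω ∂P := Finset.prod_image hinj
      _ = ∏ k ∈ Finset.range n, f (u.getD k 0) := by
          refine Finset.prod_congr rfl fun k hk => ?_
          simp only [hF]
          rw [htake_len k hk]
          have h := lintegral_map (μ := P) (hg_meas (u.getD k 0)) (hRmeas (u.take k))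
          rw [hRdist] at h
          exact h.symm
  -- summing over the whole tree
  have total : ∑' u : List ℕ, ∏ k ∈ Finset.range u.length, f (u.getD k 0)
      = ∑' n : ℕ, (Lam ν q) ^ n := by
    rw [← Equiv.tsum_eq (List.equivSigmaTuple (α := ℕ)).symm
      (fun u => ∏ k ∈ Finset.range u.length, f (u.getD k 0))]
    rw [ENNReal.tsum_sigma']
    refine tsum_congr fun n => ?_
    have inner : ∀ v : Fin n → ℕ,
        (∏ k ∈ Finset.range (List.ofFn v).length, f ((List.ofFn v).getD k 0))
          = ∏ k, f (v k) := by
      intro v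
      rw [show (List.ofFn v).length = n from List.length_ofFn]
      rw [← Fin.prod_univ_eq_prod_range (fun k => f ((List.ofFn v).getD k 0)) n]
      refine Finset.prod_congr rfl fun k _ => ?_
      congr 1
      rw [List.getD_eq_getElem _ _ (by simp [k.isLt]), List.getElem_ofFn]
    calc ∑' v : Fin n → ℕ,
          ∏ k ∈ Finset.range ((List.equivSigmaTuple (α := ℕ)).symm ⟨n, v⟩).length,
            f (((List.equivSigmaTuple (α := ℕ)).symm ⟨n, v⟩).getD k 0)
        = ∑' v : Fin n → ℕ, ∏ k, f (v k) := by
          refine tsum_congr fun v => ?_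
          simpa [List.equivSigmaTuple] using inner v
      _ = (Lam ν q) ^ n := by rw [tsum_fin_prod, hLam_eq]
  -- the dominating random variable
  set T : Ω → ℝ≥0∞ := fun ω => ∑' u : List ℕ, ENNReal.ofReal (xi R 1 u ω ^ q) with hT
  have hT_meas : Measurable T := Measurable.ennreal_tsum fun u => hxiq_meas u
  have hT_int : ∫⁻ ω, T ω ∂P = ∑' n : ℕ, (Lam ν q) ^ n := by
    rw [hT]
    rw [lintegral_tsum fun u => (hxiq_meas u).aemeasurable]
    rw [← total]
    exact tsum_congr key
  have hgeo : ∑' n : ℕ, (Lam ν q) ^ n < ⊤ := by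
    rw [ENNReal.tsum_geometric]
    exact ENNReal.inv_lt_top.mpr (tsub_pos_iff_lt.mpr hΛq)
  -- pointwise bound for the supremum
  have hbound : ∀ᵐ ω ∂P,
      (⨆ u : List ℕ, ENNReal.ofReal (xi R 1 u ω ^ p₀)) ≤ (T ω) ^ p⁻¹ := by
    filter_upwards [hae] with ω hω
    refine iSup_le fun u => ?_
    have hxi_nonneg : 0 ≤ xi R 1 u ω := by
      rw [xi, one_mul]
      exact Finset.prod_nonneg fun k _ => hω _ _
    have h1 : (ENNReal.ofReal (xi R 1 u ω ^ p₀)) ^ p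
        = ENNReal.ofReal (xi R 1 u ω ^ q) := by
      rw [ENNReal.ofReal_rpow_of_nonneg (Real.rpow_nonneg hxi_nonneg p₀) hp_pos.le,
        ← Real.rpow_mul hxi_nonneg, hpq]
    have h2 : (ENNReal.ofReal (xi R 1 u ω ^ p₀)) ^ p ≤ T ω := by
      rw [h1, hT]
      exact ENNReal.le_tsum u
    calc ENNReal.ofReal (xi R 1 u ω ^ p₀)
        = ((ENNReal.ofReal (xi R 1 u ω ^ p₀)) ^ p) ^ p⁻¹ :=
          (ENNReal.rpow_rpow_inv hp_pos.ne' _).symm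
      _ ≤ (T ω) ^ p⁻¹ := ENNReal.rpow_le_rpow h2 (inv_nonneg.mpr hp_pos.le)
  refine ⟨p, hp1, ?_, ?_⟩
  · calc ∫⁻ ω, (⨆ u : List ℕ, ENNReal.ofReal (xi R 1 u ω ^ p₀)) ^ p ∂P
        ≤ ∫⁻ ω, T ω ∂P := by
          refine lintegral_mono_ae ?_
          filter_upwards [hbound] with ω hω
          calc (⨆ u : List ℕ, ENNReal.ofReal (xi R 1 u ω ^ p₀)) ^ p
              ≤ ((T ω) ^ p⁻¹) ^ p := ENNReal.rpow_le_rpow hω hp_pos.le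
            _ = T ω := ENNReal.rpow_inv_rpow hp_pos.ne' _
      _ < ⊤ := by rw [hT_int]; exact hgeo
  · have hTfin : ∀ᵐ ω ∂P, T ω < ⊤ :=
      ae_lt_top hT_meas (by rw [hT_int]; exact hgeo.ne)
    filter_upwards [hbound, hTfin] with ω h1 h2
    exact lt_of_le_of_lt h1
      (ENNReal.rpow_lt_top_of_nonneg (inv_nonneg.mpr hp_pos.le) h2.ne)
end

section
/- (Spine random walk / many-to-one formula.) Assume the Malthusian exponent p_0 exists. Define the measure ν̃ on ℝ by ∫ k(y) ν̃(dy) = ∫_ℛ ⟨x^{p_0} k(ln x), s⟩ ν(ds) for every measurable k : ℝ → [0,∞). Then ν̃ is a probability measure, and for the cascade started from x = 1, for every n ≥ 1 and every measurable f : ℝ^n → [0,∞): E[ ∑_{|u|=n, ξ_u > 0} ξ_u^{p_0} f(ln ξ_{u|1} − ln ξ_{u|0}, …, ln ξ_{u|n} − ln ξ_{u|n−1}) ] = ∫_{ℝ^n} f(y_1, …, y_n) ν̃(dy_1)⋯ν̃(dy_n), where u|m denotes the prefix of u of length m. (Equivalently: under the tagged-leaf measure P*, S_n = ln χ_n is a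 random walk with i.i.d. steps of law ν̃.) -/
open MeasureTheory ProbabilityTheory Filter Real
open scoped ENNReal NNReal Topology

variable {Ω : Type*}

/-- The tilted step measure `ν̃` on `ℝ`, defined by
`∫ k(y) ν̃(dy) = ∫ ⟨x^{p₀} k(ln x), s⟩ ν(ds)`: it is the sum over coordinates
`i` of the image under `s ↦ ln s_i` of `ν` weighted by the density `s_i^{p₀}`
(restricted to nonzero atoms). -/
noncomputable def nuTilde (ν : Measure PMSeq) (p₀ : ℝ) : Measure ℝ :=
  Measure.sum fun i : ℕ =>
    Measure.map (fun s => Real.log (s i))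
      (ν.withDensity fun s => if s i = 0 then 0 else ENNReal.ofReal (s i ^ p₀))

section AuxLemmas

lemma iIndepFun_comp_right {Ω ι ι' β : Type*} [MeasurableSpace Ω] {mβ : MeasurableSpace β}
    {μ : Measure Ω} {f : ι → Ω → β}
    (h : iIndepFun f μ) {g : ι' → ι} (hg : Function.Injective g) :
    iIndepFun (fun k => f (g k)) μ := by
  classical
  rw [iIndepFun_iff_measure_inter_preimage_eq_mul] at h ⊢
  intro S sets hsets
  have hmain := h (S.image g) (sets := Function.extend g sets fun _ => Set.univ) ?_
  · have h1 : (⋂ i ∈ S.image g, f i ⁻¹' Function.extend g sets (fun _ => Set.univ) i)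
        = ⋂ k ∈ S, f (g k) ⁻¹' sets k := by
      ext ω
      simp only [Set.mem_iInter, Finset.mem_image]
      constructor
      · intro H k hk
        have := H (g k) ⟨k, hk, rfl⟩
        rwa [hg.extend_apply] at this
      · rintro H i ⟨k, hk, rfl⟩
        rw [hg.extend_apply]; exact H k hk
    rw [h1] at hmain
    rw [hmain, Finset.prod_image (fun x _ y _ hxy => hg hxy)]
    refine Finset.prod_congr rfl fun k _ => ?_
    rw [hg.extend_apply]
  · intro i hi
    rcases Finset.mem_image.mp hi with ⟨k, hk, rfl⟩
    rw [hg.extend_apply]; exact hsets k hk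

lemma lintegral_pi_prod {α : Type*} [MeasurableSpace α] (μ : Measure α) [SigmaFinite μ] :
    ∀ (n : ℕ) (h : Fin n → α → ℝ≥0∞), (∀ k, Measurable (h k)) →
    ∫⁻ x, ∏ k, h k (x k) ∂(Measure.pi fun _ : Fin n => μ) = ∏ k, ∫⁻ a, h k a ∂μ := by
  intro n
  induction n with
  | zero =>
    intro h _
    simp [Measure.pi_of_empty (fun _ : Fin 0 => μ)]
  | succ n ih =>
    intro h hm
    have hmp := measurePreserving_piFinSuccAbove (fun _ : Fin (n+1) => μ) 0
    set G : α × (Fin n → α) → ℝ≥0∞ := fun p => h 0 p.1 * ∏ k : Fin n, h k.succ (p.2 k) with hG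
    have hGm : Measurable G := ((hm 0).comp measurable_fst).mul
      (Finset.measurable_prod _ fun k _ =>
        (hm k.succ).comp ((measurable_pi_apply k).comp measurable_snd))
    have key : ∀ x : Fin (n+1) → α,
        (∏ k, h k (x k)) = G ((MeasurableEquiv.piFinSuccAbove (fun _ => α) 0) x) := by
      intro x
      rw [Fin.prod_univ_succ]
      simp [G, MeasurableEquiv.piFinSuccAbove, Fin.insertNthEquiv, Fin.tail]
    calc ∫⁻ x, ∏ k, h k (x k) ∂(Measure.pi fun _ : Fin (n+1) => μ)
        = ∫⁻ x, G ((MeasurableEquiv.piFinSuccAbove (fun _ => α) 0) x)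
            ∂(Measure.pi fun _ : Fin (n+1) => μ) := by simp_rw [key]
      _ = ∫⁻ p, G p ∂(μ.prod (Measure.pi fun _ : Fin n => μ)) := hmp.lintegral_comp hGm
      _ = (∫⁻ a, h 0 a ∂μ) * ∫⁻ y, ∏ k : Fin n, h k.succ (y k) ∂(Measure.pi fun _ : Fin n => μ) :=
          lintegral_prod_mul (hm 0).aemeasurable
            (Finset.measurable_prod _ fun (k : Fin n) _ =>
              (hm k.succ).comp (measurable_pi_apply k)).aemeasurable
      _ = ∏ k, ∫⁻ a, h k a ∂μ := by
          rw [ih _ fun k => hm k.succ, Fin.prod_univ_succ]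

lemma tsum_pi_prod : ∀ (n : ℕ) (c : Fin n → ℕ → ℝ≥0∞),
    ∑' I : Fin n → ℕ, ∏ k, c k (I k) = ∏ k, ∑' i, c k i := by
  intro n
  induction n with
  | zero =>
    intro c
    simp only [Finset.univ_eq_empty, Finset.prod_empty]
    exact tsum_eq_single (fun i => i.elim0) (fun b hb => absurd (Subsingleton.elim b _) hb) |>.trans rfl
  | succ n ih =>
    intro c
    rw [← (Fin.consEquiv (fun _ : Fin (n+1) => ℕ)).tsum_eq, ENNReal.tsum_prod']
    have h2 : ∀ (a : ℕ) (b : Fin n → ℕ),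
        (∏ k, c k ((Fin.consEquiv (fun _ : Fin (n+1) => ℕ)) (a, b) k))
          = c 0 a * ∏ k : Fin n, c k.succ (b k) := by
      intro a b; rw [Fin.prod_univ_succ]; simp [Fin.consEquiv]
    simp_rw [h2, ENNReal.tsum_mul_left]
    rw [ENNReal.tsum_mul_right, ih, Fin.prod_univ_succ]

lemma measurable_rpow_const' (p : ℝ) : Measurable fun x : ℝ => x ^ p := by measurability

/-- The weight function `s ↦ s_i^{p₀} 1_{s_i ≠ 0}`. -/
noncomputable def wfn (p₀ : ℝ) (i : ℕ) (s : PMSeq) : ℝ≥0∞ :=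
  if s i = 0 then 0 else ENNReal.ofReal (s i ^ p₀)

lemma measurable_wfn (p₀ : ℝ) (i : ℕ) : Measurable (wfn p₀ i) := by
  unfold wfn
  refine Measurable.ite ?_ measurable_const
    (ENNReal.measurable_ofReal.comp ((measurable_rpow_const' p₀).comp (measurable_pi_apply i)))
  exact (measurable_pi_apply i) (measurableSet_singleton 0)

lemma nuTilde_eq_sum_wfn (ν : Measure PMSeq) (p₀ : ℝ) :
    nuTilde ν p₀ = Measure.sum fun i : ℕ =>
      Measure.map (fun s => Real.log (s i)) (ν.withDensity (wfn p₀ i)) := rfl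

lemma nuTilde_lintegral (ν : Measure PMSeq) (p₀ : ℝ) {g : ℝ → ℝ≥0∞} (hg : Measurable g) :
    ∫⁻ y, g y ∂(nuTilde ν p₀) = ∫⁻ s, ∑' i, wfn p₀ i s * g (Real.log (s i)) ∂ν := by
  have hlog : ∀ i : ℕ, Measurable fun s : PMSeq => Real.log (s i) :=
    fun i => Real.measurable_log.comp (measurable_pi_apply i)
  rw [nuTilde_eq_sum_wfn, lintegral_sum_measure,
    lintegral_tsum (μ := ν) (f := fun i s => wfn p₀ i s * g (Real.log (s i)))
      (fun i => ((measurable_wfn p₀ i).mul (hg.comp (hlog i))).aemeasurable)]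
  refine tsum_congr fun i => ?_
  rw [lintegral_map hg (hlog i),
    lintegral_withDensity_eq_lintegral_mul ν (measurable_wfn p₀ i)
      (show Measurable fun s : PMSeq => g (Real.log (s i)) from hg.comp (hlog i))]
  rfl

lemma nuTilde_isProbability (ν : Measure PMSeq) (p₀ : ℝ) (hΛ : Lam ν p₀ = 1) :
    IsProbabilityMeasure (nuTilde ν p₀) := by
  constructor
  rw [← lintegral_one, nuTilde_lintegral ν p₀ measurable_const]
  simp only [mul_one]
  exact hΛ

lemma getD_take' (u : List ℕ) {k m : ℕ} (hmk : m < k) : (u.take k).getD m 0 = u.getD m 0 := by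
  by_cases hm : m < u.length
  · rw [List.getD_eq_getElem _ _ (by rw [List.length_take]; exact lt_min hmk hm),
      List.getD_eq_getElem _ _ hm]
    simp
  · rw [List.getD_eq_default _ _ (by rw [List.length_take]; exact min_le_right _ _ |>.trans (not_lt.mp hm)),
      List.getD_eq_default _ _ (not_lt.mp hm)]

lemma xi_take {Ω : Type*} (R : List ℕ → Ω → ℕ → ℝ) (ω : Ω) (u : List ℕ) {n j : ℕ}
    (hu : u.length = n) (hj : j ≤ n) :
    xi R 1 (u.take j) ω = ∏ k ∈ Finset.range j, R (u.take k) ω (u.getD k 0) := by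
  rw [xi, one_mul, List.length_take, hu, min_eq_left hj]
  refine Finset.prod_congr rfl fun k hk => ?_
  have hkj : k < j := Finset.mem_range.mp hk
  rw [List.take_take, min_eq_left hkj.le, getD_take' u hkj]

/-- Lists of length `n` are equivalent to `Fin n → ℕ` via `getD`. -/
noncomputable def listFinEquiv (n : ℕ) : {u : List ℕ // u.length = n} ≃ (Fin n → ℕ) where
  toFun u m := (u : List ℕ).getD m 0
  invFun I := ⟨List.ofFn I, List.length_ofFn⟩
  left_inv := by
    rintro ⟨u, rfl⟩
    ext1
    refine List.ext_getElem (by simp) fun i h1 h2 => ?_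
    simp only [List.getElem_ofFn]
    rw [List.getD_eq_getElem _ _ h2]
  right_inv I := by
    funext m
    simp only []
    rw [List.getD_eq_getElem _ _ (by simpa using m.isLt)]
    simp

end AuxLemmas

/-- spine random walk / many-to-one formula. If the
Malthusian exponent `p₀` exists then `ν̃` is a probability measure and, for the
cascade started from `1`, for every `n ≥ 1` and measurable
`f : ℝⁿ → [0,∞]`,
`E[∑_{|u|=n, ξ_u>0} ξ_u^{p₀} f(ln ξ_{u|1} - ln ξ_{u|0}, …, ln ξ_{u|n} - ln ξ_{u|n-1})]
  = ∫ f dν̃^{⊗n}`: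
the logarithm of the size along the tagged leaf is a random walk with step
distribution `ν̃`. -/
theorem stmt11 {Ω : Type*} [MeasurableSpace Ω] (P : Measure Ω) [IsProbabilityMeasure P]
    (ν : Measure PMSeq) [IsProbabilityMeasure ν] (hν : ∀ᵐ s ∂ν, IsPointSeq s)
    (R : List ℕ → Ω → ℕ → ℝ) (hRmeas : ∀ u, Measurable (R u))
    (hRindep : iIndepFun R P)
    (hRdist : ∀ u, Measure.map (R u) P = ν)
    (p₀ : ℝ) (hmal : IsMalthusian ν p₀) :
    IsProbabilityMeasure (nuTilde ν p₀) ∧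
    ∀ (n : ℕ), 1 ≤ n → ∀ f : (Fin n → ℝ) → ℝ≥0∞, Measurable f →
      ∫⁻ ω, ∑' u : {u : List ℕ // u.length = n},
          (if 0 < xi R 1 u ω then
            ENNReal.ofReal (xi R 1 u ω ^ p₀) *
              f (fun m => Real.log (xi R 1 ((u : List ℕ).take ((m : ℕ) + 1)) ω) -
                Real.log (xi R 1 ((u : List ℕ).take (m : ℕ)) ω))
          else 0) ∂P
        = ∫⁻ y, f y ∂(Measure.pi fun _ : Fin n => nuTilde ν p₀) := by
  classical
  obtain ⟨hdom, hΛ, -⟩ := hmal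
  haveI hprob : IsProbabilityMeasure (nuTilde ν p₀) := nuTilde_isProbability ν p₀ hΛ
  refine ⟨hprob, ?_⟩
  intro n hn f hf
  -- measurability of the joint map and of the tilted integrand
  have hT : ∀ (v : Fin n → List ℕ), Measurable (fun ω (k : Fin n) => R (v k) ω) :=
    fun v => measurable_pi_lambda _ fun k => hRmeas _
  have hLm : ∀ I : Fin n → ℕ,
      Measurable (fun (σ : Fin n → PMSeq) (m : Fin n) => Real.log (σ m (I m))) :=
    fun I => measurable_pi_lambda _ fun m =>
      Real.measurable_log.comp ((measurable_pi_apply (I m)).comp (measurable_pi_apply m))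
  set G : (Fin n → ℕ) → (Fin n → PMSeq) → ℝ≥0∞ := fun I σ =>
    (∏ k, wfn p₀ (I k) (σ k)) * f (fun m => Real.log (σ m (I m))) with hGdef
  have hGm : ∀ I, Measurable (G I) := fun I =>
    (Finset.measurable_prod _ fun k _ =>
      (measurable_wfn p₀ (I k)).comp (measurable_pi_apply k)).mul (hf.comp (hLm I))
  -- the joint law of the marks along any injective family of words is the product measure
  have joint : ∀ (v : Fin n → List ℕ), Function.Injective v →
      Measure.map (fun ω (k : Fin n) => R (v k) ω) P = Measure.pi (fun _ => ν) := by
    intro v hv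
    refine (Measure.pi_eq fun A hA => ?_).symm
    rw [Measure.map_apply (hT v) (MeasurableSet.univ_pi hA)]
    have hpre : (fun ω (k : Fin n) => R (v k) ω) ⁻¹' (Set.univ.pi A)
        = ⋂ k ∈ Finset.univ, R (v k) ⁻¹' A k := by
      ext ω; simp [Set.mem_pi]
    rw [hpre, (iIndepFun_comp_right hRindep hv).measure_inter_preimage_eq_mul
      Finset.univ (fun k _ => hA k)]
    exact Finset.prod_congr rfl fun k _ => by
      rw [← hRdist (v k), Measure.map_apply (hRmeas _) (hA k)]
  -- the product of the tilted measures is the sum over multi-indices of weighted images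
  have hpiEq : Measure.pi (fun _ : Fin n => nuTilde ν p₀) =
      Measure.sum (fun I : Fin n → ℕ =>
        Measure.map (fun (σ : Fin n → PMSeq) (m : Fin n) => Real.log (σ m (I m)))
          ((Measure.pi fun _ : Fin n => ν).withDensity fun σ => ∏ k, wfn p₀ (I k) (σ k))) := by
    refine Measure.pi_eq fun A hA => ?_
    rw [Measure.sum_apply _ (MeasurableSet.univ_pi hA)]
    have key : ∀ I : Fin n → ℕ,
        (Measure.map (fun (σ : Fin n → PMSeq) (m : Fin n) => Real.log (σ m (I m)))
          ((Measure.pi fun _ : Fin n => ν).withDensity fun σ => ∏ k, wfn p₀ (I k) (σ k)))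
          (Set.univ.pi A)
        = ∏ k, ∫⁻ s, wfn p₀ (I k) s *
            (A k).indicator (fun _ => (1 : ℝ≥0∞)) (Real.log (s (I k))) ∂ν := by
      intro I
      rw [Measure.map_apply (hLm I) (MeasurableSet.univ_pi hA)]
      have hpre : (fun (σ : Fin n → PMSeq) (m : Fin n) => Real.log (σ m (I m))) ⁻¹' Set.univ.pi A
          = Set.univ.pi fun k => {s : PMSeq | Real.log (s (I k)) ∈ A k} := by
        ext σ; simp [Set.mem_pi]
      have hBm : ∀ k : Fin n, MeasurableSet {s : PMSeq | Real.log (s (I k)) ∈ A k} :=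
        fun k => (Real.measurable_log.comp (measurable_pi_apply (I k))) (hA k)
      rw [hpre, withDensity_apply _ (MeasurableSet.univ_pi hBm),
        ← lintegral_indicator (MeasurableSet.univ_pi hBm)]
      have hind : ∀ σ : Fin n → PMSeq,
          (Set.univ.pi fun k => {s : PMSeq | Real.log (s (I k)) ∈ A k}).indicator
            (fun σ => ∏ k, wfn p₀ (I k) (σ k)) σ
          = ∏ k, (wfn p₀ (I k) (σ k) *
              (A k).indicator (fun _ => (1 : ℝ≥0∞)) (Real.log (σ k (I k)))) := by
        intro σ
        by_cases hσ : σ ∈ Set.univ.pi fun k => {s : PMSeq | Real.log (s (I k)) ∈ A k}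
        · rw [Set.indicator_of_mem hσ]
          refine Finset.prod_congr rfl fun k _ => ?_
          have h' : Real.log (σ k (I k)) ∈ A k := hσ k (Set.mem_univ k)
          rw [Set.indicator_of_mem h', mul_one]
        · rw [Set.indicator_of_notMem hσ]
          rw [Set.mem_univ_pi] at hσ; push_neg at hσ
          obtain ⟨k, hk⟩ := hσ
          have h' : Real.log (σ k (I k)) ∉ A k := hk
          exact (Finset.prod_eq_zero (Finset.mem_univ k)
            (by rw [Set.indicator_of_notMem h', mul_zero])).symm
      simp_rw [hind]
      exact lintegral_pi_prod ν n _ fun k => (measurable_wfn p₀ (I k)).mul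
        ((measurable_const.indicator (hA k)).comp
          (Real.measurable_log.comp (measurable_pi_apply (I k))))
    simp_rw [key]
    rw [tsum_pi_prod n (fun k i => ∫⁻ s, wfn p₀ i s *
      (A k).indicator (fun _ => (1 : ℝ≥0∞)) (Real.log (s i)) ∂ν)]
    refine Finset.prod_congr rfl fun k _ => ?_
    have hAk : nuTilde ν p₀ (A k)
        = ∫⁻ y, (A k).indicator (fun _ => (1 : ℝ≥0∞)) y ∂(nuTilde ν p₀) := by
      rw [lintegral_indicator (hA k), setLIntegral_one]
    rw [hAk, nuTilde_lintegral ν p₀ (measurable_const.indicator (hA k)),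
      lintegral_tsum (μ := ν) (f := fun i s => wfn p₀ i s *
        (A k).indicator (fun _ => (1 : ℝ≥0∞)) (Real.log (s i)))
        (fun i => ((measurable_wfn p₀ i).mul
          ((measurable_const.indicator (hA k)).comp
            (Real.measurable_log.comp (measurable_pi_apply i)))).aemeasurable)]
  -- rewrite of the right-hand side
  have hRHS : ∫⁻ y, f y ∂(Measure.pi fun _ : Fin n => nuTilde ν p₀)
      = ∑' I : Fin n → ℕ, ∫⁻ σ, G I σ ∂(Measure.pi fun _ : Fin n => ν) := by
    rw [hpiEq, lintegral_sum_measure]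
    refine tsum_congr fun I => ?_
    rw [lintegral_map hf (hLm I),
      lintegral_withDensity_eq_lintegral_mul _
        (show Measurable fun σ : Fin n → PMSeq => ∏ k, wfn p₀ (I k) (σ k) from
          Finset.measurable_prod _ fun (k : Fin n) _ =>
            (measurable_wfn p₀ (I k)).comp (measurable_pi_apply k))
        (show Measurable fun σ : Fin n → PMSeq =>
          f (fun m => Real.log (σ m (I m))) from hf.comp (hLm I))]
    rfl
  -- almost everywhere, all marks are nonnegative
  have hae : ∀ᵐ ω ∂P, ∀ v : List ℕ, ∀ i, 0 ≤ R v ω i := by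
    rw [ae_all_iff]
    intro v
    have hset : MeasurableSet {s : PMSeq | ∀ i, 0 ≤ s i} := by
      have heq : {s : PMSeq | ∀ i, 0 ≤ s i} = ⋂ i, {s : PMSeq | 0 ≤ s i} := by ext; simp
      rw [heq]
      exact MeasurableSet.iInter fun i =>
        measurableSet_le measurable_const (measurable_pi_apply i)
    have h1 : ∀ᵐ s ∂ν, ∀ i, 0 ≤ s i := hν.mono fun s hs => hs.1
    exact (ae_map_iff (hRmeas v).aemeasurable hset).mp (by rw [hRdist v]; exact h1)
  -- pointwise identification of the cascade summands
  have hterm : ∀ᵐ ω ∂P, ∀ u : {u : List ℕ // u.length = n},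
      (if 0 < xi R 1 u ω then
        ENNReal.ofReal (xi R 1 u ω ^ p₀) *
          f (fun m => Real.log (xi R 1 ((u : List ℕ).take ((m : ℕ) + 1)) ω) -
            Real.log (xi R 1 ((u : List ℕ).take (m : ℕ)) ω))
        else 0)
      = G (fun m => (u : List ℕ).getD m 0) (fun k => R ((u : List ℕ).take k) ω) := by
    filter_upwards [hae] with ω hω
    rintro ⟨u, hu⟩
    simp only []
    set r : ℕ → ℝ := fun k => R (u.take k) ω (u.getD k 0) with hr
    have hxij : ∀ j, j ≤ n → xi R 1 (u.take j) ω = ∏ k ∈ Finset.range j, r k :=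
      fun j hj => xi_take R ω u hu hj
    have hutn : u.take n = u := by rw [← hu]; exact List.take_length
    have hxu : xi R 1 u ω = ∏ k ∈ Finset.range n, r k := by
      rw [← hutn]; exact hxij n le_rfl
    by_cases hpos : ∀ k, k < n → r k ≠ 0
    · have hrpos : ∀ k, k < n → 0 < r k :=
        fun k hk => lt_of_le_of_ne (hω _ _) (Ne.symm (hpos k hk))
      have hxpos : 0 < xi R 1 u ω := by
        rw [hxu]
        exact Finset.prod_pos fun k hk => hrpos k (Finset.mem_range.mp hk)
      rw [if_pos hxpos, hGdef]
      have harg : (fun m : Fin n => Real.log (xi R 1 (u.take ((m : ℕ) + 1)) ω) -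
          Real.log (xi R 1 (u.take (m : ℕ)) ω))
          = fun m : Fin n => Real.log (R (u.take (m : ℕ)) ω (u.getD (m : ℕ) 0)) := by
        funext m
        have h1 : xi R 1 (u.take ((m : ℕ) + 1)) ω = (∏ k ∈ Finset.range (m : ℕ), r k) * r m := by
          rw [hxij ((m : ℕ) + 1) (Nat.succ_le_of_lt m.isLt), Finset.prod_range_succ]
        have h2 : xi R 1 (u.take (m : ℕ)) ω = ∏ k ∈ Finset.range (m : ℕ), r k :=
          hxij (m : ℕ) (le_of_lt m.isLt)
        have hne : (∏ k ∈ Finset.range (m : ℕ), r k) ≠ 0 :=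
          Finset.prod_ne_zero_iff.mpr fun k hk =>
            hpos k (lt_trans (Finset.mem_range.mp hk) m.isLt)
        rw [h1, h2, Real.log_mul hne (hpos (m : ℕ) m.isLt), add_sub_cancel_left]
      rw [harg]
      congr 1
      calc ENNReal.ofReal (xi R 1 u ω ^ p₀)
          = ENNReal.ofReal ((∏ k ∈ Finset.range n, r k) ^ p₀) := by rw [hxu]
        _ = ENNReal.ofReal (∏ k ∈ Finset.range n, r k ^ p₀) := by
            rw [Real.finset_prod_rpow _ _
              (fun k hk => (hrpos k (Finset.mem_range.mp hk)).le) p₀]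
        _ = ∏ k ∈ Finset.range n, ENNReal.ofReal (r k ^ p₀) :=
            ENNReal.ofReal_prod_of_nonneg fun k _ => Real.rpow_nonneg (hω _ _) p₀
        _ = ∏ k : Fin n, ENNReal.ofReal (r k ^ p₀) :=
            (Fin.prod_univ_eq_prod_range (fun k => ENNReal.ofReal (r k ^ p₀)) n).symm
        _ = ∏ k : Fin n, wfn p₀ (u.getD (k : ℕ) 0) (R (u.take (k : ℕ)) ω) :=
            Finset.prod_congr rfl fun k _ => by
              rw [wfn, if_neg (hpos (k : ℕ) k.isLt)]
    · push_neg at hpos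
      obtain ⟨k, hk, hk0⟩ := hpos
      have hxz : xi R 1 u ω = 0 := by
        rw [hxu]; exact Finset.prod_eq_zero (Finset.mem_range.mpr hk) hk0
      rw [if_neg (by rw [hxz]; exact lt_irrefl 0), hGdef]
      refine (mul_eq_zero_of_left ?_ _).symm
      refine Finset.prod_eq_zero (Finset.mem_univ (⟨k, hk⟩ : Fin n)) ?_
      rw [wfn, if_pos hk0]
  -- main computation
  calc ∫⁻ ω, ∑' u : {u : List ℕ // u.length = n},
        (if 0 < xi R 1 u ω then
          ENNReal.ofReal (xi R 1 u ω ^ p₀) *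
            f (fun m => Real.log (xi R 1 ((u : List ℕ).take ((m : ℕ) + 1)) ω) -
              Real.log (xi R 1 ((u : List ℕ).take (m : ℕ)) ω))
          else 0) ∂P
      = ∫⁻ ω, ∑' u : {u : List ℕ // u.length = n},
          G (fun m => (u : List ℕ).getD m 0) (fun k => R ((u : List ℕ).take k) ω) ∂P := by
        refine lintegral_congr_ae ?_
        filter_upwards [hterm] with ω hω
        exact tsum_congr fun u => hω u
    _ = ∑' u : {u : List ℕ // u.length = n},
          ∫⁻ ω, G (fun m => (u : List ℕ).getD m 0) (fun k => R ((u : List ℕ).take k) ω) ∂P :=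
        lintegral_tsum fun u =>
          ((hGm _).comp (hT fun k : Fin n => (u : List ℕ).take k)).aemeasurable
    _ = ∑' u : {u : List ℕ // u.length = n},
          ∫⁻ σ, G (fun m => (u : List ℕ).getD m 0) σ ∂(Measure.pi fun _ : Fin n => ν) := by
        refine tsum_congr fun u => ?_
        have hinj : Function.Injective fun k : Fin n => (u : List ℕ).take k := by
          intro a b hab
          have h1 := congrArg List.length hab
          simp only [List.length_take, u.2] at h1
          apply Fin.ext
          rwa [min_eq_left a.isLt.le, min_eq_left b.isLt.le] at h1
        rw [← joint (fun k : Fin n => (u : List ℕ).take k) hinj,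
          lintegral_map (hGm _) (hT _)]
    _ = ∑' I : Fin n → ℕ, ∫⁻ σ, G I σ ∂(Measure.pi fun _ : Fin n => ν) :=
        (listFinEquiv n).tsum_eq fun I => ∫⁻ σ, G I σ ∂(Measure.pi fun _ : Fin n => ν)
    _ = ∫⁻ y, f y ∂(Measure.pi fun _ : Fin n => nuTilde ν p₀) := hRHS.symm
end

section
/- Under the Malthusian hypotheses and assuming m := ∫_ℛ #s ν(ds) < ∞, for the cascade started from x = 1: if L and Q are lines in 𝒰 with L ⪯ Q, then E[M_Q | H_L] ≤ M_L almost surely, where M_Q = ∑_{u∈Q} ξ_u^{p_0}. -/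
open MeasureTheory ProbabilityTheory Filter Real
open scoped ENNReal NNReal Topology

variable {Ω : Type*}

/-- `L` is a line: no element of `L` is a strict prefix of another element. -/
def IsLine (L : Set (List ℕ)) : Prop :=
  ∀ u ∈ L, ∀ v ∈ L, u <+: v → u = v

/-- `L ⪯ Q`: every element of `Q` stems from (has a prefix in) `L`. -/
def LineLE (L Q : Set (List ℕ)) : Prop := ∀ q ∈ Q, ∃ l ∈ L, l <+: q

/-- `Q` covers `L`: `L ⪯ Q` and every node stemming from `L` either stems from
`Q` or has progeny in `Q`. -/
def Covers (L Q : Set (List ℕ)) : Prop :=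
  LineLE L Q ∧ ∀ u : List ℕ, (∃ l ∈ L, l <+: u) →
    (∃ q ∈ Q, q <+: u) ∨ (∃ q ∈ Q, u <+: q)

/-- The pre-`L` sigma-field `H_L`, generated by the reproduction marks of the
strict ancestors of the members of `L` (those marks determine `(ξ_u)_{u ⪯ l, l ∈ L}`). -/
noncomputable def lineSigma [MeasurableSpace Ω] (R : List ℕ → Ω → ℕ → ℝ)
    (L : Set (List ℕ)) : MeasurableSpace Ω :=
  ⨆ (v : List ℕ) (_ : ∃ l ∈ L, v <+: l ∧ v ≠ l),
    MeasurableSpace.comap (R v) inferInstance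

/-- `M_Q = ∑_{u ∈ Q} ξ_u^{p₀}` for the cascade started from `1`. -/
noncomputable def lineSum (R : List ℕ → Ω → ℕ → ℝ) (p₀ : ℝ) (Q : Set (List ℕ))
    (ω : Ω) : ℝ :=
  ∑' u : Q, if xi R 1 u ω = 0 then 0 else xi R 1 (u : List ℕ) ω ^ p₀


/-! Auxiliary definitions -/

noncomputable def stmtGG (p₀ r : ℝ) : ℝ≥0∞ := if r = 0 then 0 else ENNReal.ofReal (r ^ p₀)

lemma measurable_stmtGG (p₀ : ℝ) : Measurable (stmtGG p₀) := by
  have h1 : Measurable fun r : ℝ => ENNReal.ofReal (Real.exp (Real.log r * p₀)) :=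
    ENNReal.measurable_ofReal.comp (Real.measurable_exp.comp
      (Real.measurable_log.mul measurable_const))
  have h2 : Measurable fun r : ℝ =>
      ENNReal.ofReal (Real.exp (Real.log r * p₀) * Real.cos (p₀ * Real.pi)) :=
    ENNReal.measurable_ofReal.comp ((Real.measurable_exp.comp
      (Real.measurable_log.mul measurable_const)).mul measurable_const)
  have heq : stmtGG p₀ = fun r => if r = 0 then 0 else if 0 < r then
      ENNReal.ofReal (Real.exp (Real.log r * p₀))
      else ENNReal.ofReal (Real.exp (Real.log r * p₀) * Real.cos (p₀ * Real.pi)) := by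
    funext r
    unfold stmtGG
    by_cases h0 : r = 0
    · simp [h0]
    by_cases hpos : 0 < r
    · rw [if_neg h0, if_neg h0, if_pos hpos, Real.rpow_def_of_pos hpos]
    · have hneg : r < 0 := lt_of_le_of_ne (not_lt.mp hpos) h0
      rw [if_neg h0, if_neg h0, if_neg hpos, Real.rpow_def_of_neg hneg]
  rw [heq]
  refine Measurable.ite measurableSet_eq measurable_const ?_
  exact Measurable.ite (measurableSet_lt measurable_const measurable_id) h1 h2

noncomputable def stmtEE (ν : Measure PMSeq) (p₀ : ℝ) (i : ℕ) : ℝ≥0∞ :=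
  ∫⁻ s, stmtGG p₀ (s i) ∂ν

noncomputable def stmtCC (ν : Measure PMSeq) (p₀ : ℝ) (u : List ℕ) : ℝ≥0∞ :=
  (u.map (stmtEE ν p₀)).prod

/-! The antichain bound -/

lemma stmt_antichain_sum_le_one (e' : ℕ → ℝ≥0∞) (he : ∑' i, e' i ≤ 1) :
    ∀ (N : ℕ) (F : Finset (List ℕ)), (∀ u ∈ F, ∀ v ∈ F, u <+: v → u = v) →
      (∑ u ∈ F, u.length) ≤ N → ∑ u ∈ F, (u.map e').prod ≤ 1 := by
  classical
  intro N
  induction N with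
  | zero =>
    intro F hanti hlen
    rcases Finset.eq_empty_or_nonempty F with rfl | ⟨u, hu⟩
    · simp
    have hall : ∀ v ∈ F, v = [] := by
      intro v hv
      have h1 : v.length ≤ ∑ w ∈ F, w.length :=
        Finset.single_le_sum (f := fun w : List ℕ => w.length) (fun _ _ => Nat.zero_le _) hv
      have h2 : v.length = 0 := by omega
      exact List.length_eq_zero_iff.mp h2
    have hF : F = {[]} := Finset.eq_singleton_iff_unique_mem.mpr ⟨hall u hu ▸ hu, hall⟩
    simp [hF]
  | succ N ih =>
    intro F hanti hlen
    by_cases hnil : ([] : List ℕ) ∈ F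
    · have hF : F = {[]} := Finset.eq_singleton_iff_unique_mem.mpr
        ⟨hnil, fun v hv => (hanti _ hnil _ hv List.nil_prefix).symm⟩
      simp [hF]
    have hne : ∀ u ∈ F, u ≠ [] := fun u hu h => hnil (h ▸ hu)
    rw [← Finset.sum_fiberwise_of_maps_to (g := List.headI) (t := F.image List.headI)
      (fun u hu => Finset.mem_image_of_mem _ hu) (fun u => (u.map e').prod)]
    have hinner : ∀ i ∈ F.image List.headI,
        ∑ u ∈ F.filter (fun u => u.headI = i), (u.map e').prod ≤ e' i := by
      intro i hi
      set Fl := F.filter (fun u => u.headI = i) with hFl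
      have hFlsub : Fl ⊆ F := Finset.filter_subset _ _
      have hmem : ∀ u ∈ Fl, ∃ t, u = i :: t := by
        intro u hu
        have hu' := Finset.mem_filter.mp hu
        obtain ⟨a, t, rfl⟩ := List.exists_cons_of_ne_nil (hne _ hu'.1)
        refine ⟨t, ?_⟩
        have : a = i := by simpa using hu'.2
        rw [this]
      have hinj : ∀ u ∈ Fl, ∀ v ∈ Fl, u.tail = v.tail → u = v := by
        intro u hu v hv h
        obtain ⟨t, rfl⟩ := hmem u hu
        obtain ⟨t', rfl⟩ := hmem v hv
        simp only [List.tail_cons] at h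
        rw [h]
      obtain ⟨u₀, hu₀F, hu₀h⟩ := Finset.mem_image.mp hi
      have hu₀ : u₀ ∈ Fl := Finset.mem_filter.mpr ⟨hu₀F, hu₀h⟩
      have hanti' : ∀ a ∈ Fl.image List.tail, ∀ b ∈ Fl.image List.tail, a <+: b → a = b := by
        intro a ha b hb hab
        obtain ⟨u, hu, rfl⟩ := Finset.mem_image.mp ha
        obtain ⟨v, hv, rfl⟩ := Finset.mem_image.mp hb
        obtain ⟨t, rfl⟩ := hmem u hu
        obtain ⟨t', rfl⟩ := hmem v hv
        simp only [List.tail_cons] at hab ⊢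
        have hpre : (i :: t) <+: (i :: t') := List.cons_prefix_cons.mpr ⟨rfl, hab⟩
        have h5 := hanti _ (hFlsub hu) _ (hFlsub hv) hpre
        injection h5
      have hlen' : ∑ v ∈ Fl.image List.tail, v.length ≤ N := by
        have h1 : ∑ v ∈ Fl.image List.tail, v.length = ∑ u ∈ Fl, u.tail.length :=
          Finset.sum_image hinj
        have h2 : ∑ u ∈ Fl, u.length ≤ N + 1 :=
          le_trans (Finset.sum_le_sum_of_subset hFlsub) hlen
        have h3 : ∑ u ∈ Fl, u.length = (∑ u ∈ Fl, u.tail.length) + Fl.card := by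
          rw [Finset.card_eq_sum_ones, ← Finset.sum_add_distrib]
          refine Finset.sum_congr rfl fun u hu => ?_
          obtain ⟨t, rfl⟩ := hmem u hu
          simp
        have h4 : 0 < Fl.card := Finset.card_pos.mpr ⟨u₀, hu₀⟩
        omega
      have hIH := ih (Fl.image List.tail) hanti' hlen'
      have heq : ∑ u ∈ Fl, (u.map e').prod
          = e' i * ∑ v ∈ Fl.image List.tail, (v.map e').prod := by
        rw [Finset.sum_image hinj, Finset.mul_sum]
        refine Finset.sum_congr rfl fun u hu => ?_
        obtain ⟨t, rfl⟩ := hmem u hu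
        simp
      rw [heq]
      calc e' i * ∑ v ∈ Fl.image List.tail, (v.map e').prod
          ≤ e' i * 1 := mul_le_mul_right hIH _
        _ = e' i := mul_one _
    calc ∑ i ∈ F.image List.headI,
          ∑ u ∈ F.filter (fun u => u.headI = i), (u.map e').prod
        ≤ ∑ i ∈ F.image List.headI, e' i := Finset.sum_le_sum hinner
      _ ≤ ∑' i, e' i := ENNReal.sum_le_tsum _
      _ ≤ 1 := he

lemma stmt_tsum_prod_le_one {ι : Type*} (e' : ℕ → ℝ≥0∞) (he : ∑' i, e' i ≤ 1)
    (w : ι → List ℕ) (hinj : Function.Injective w)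
    (hanti : ∀ i j, w i <+: w j → w i = w j) :
    ∑' i, ((w i).map e').prod ≤ 1 := by
  classical
  rw [ENNReal.tsum_eq_iSup_sum]
  refine iSup_le fun F => ?_
  have h1 : ∑ i ∈ F, ((w i).map e').prod = ∑ u ∈ F.image w, (u.map e').prod :=
    (Finset.sum_image (f := fun u => (u.map e').prod) fun x _ y _ h => hinj h).symm
  rw [h1]
  refine stmt_antichain_sum_le_one e' he (∑ u ∈ F.image w, u.length) _ ?_ le_rfl
  intro u hu v hv huv
  obtain ⟨i, _, rfl⟩ := Finset.mem_image.mp hu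
  obtain ⟨j, _, rfl⟩ := Finset.mem_image.mp hv
  exact hanti i j huv
section Aux2

variable {Ω : Type*} [m0 : MeasurableSpace Ω]

/-- `W_b(u) = ∏_{k<|u|} g(R_{b ++ u|k}(u_k))`, the `p₀`-weight of the path `u`
in the subtree rooted at `b`. -/
noncomputable def stmtWF (R : List ℕ → Ω → ℕ → ℝ) (p₀ : ℝ) (b u : List ℕ) (ω : Ω) : ℝ≥0∞ :=
  ∏ k ∈ Finset.range u.length, stmtGG p₀ (R (b ++ u.take k) ω (u.getD k 0))

/-- The σ-algebra generated by the marks of the nodes in `S`. -/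
noncomputable def stmtMS (R : List ℕ → Ω → ℕ → ℝ) (S : Set (List ℕ)) : MeasurableSpace Ω :=
  ⨆ v ∈ S, MeasurableSpace.comap (R v) inferInstance

lemma stmtMS_le (R : List ℕ → Ω → ℕ → ℝ) (hRmeas : ∀ u, Measurable (R u))
    (S : Set (List ℕ)) : stmtMS R S ≤ m0 :=
  iSup₂_le fun v _ => measurable_iff_comap_le.mp (hRmeas v)

lemma measurable_R_stmtMS (R : List ℕ → Ω → ℕ → ℝ) {S : Set (List ℕ)} {v : List ℕ}
    (hv : v ∈ S) : Measurable[stmtMS R S] (R v) := by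
  have h1 : Measurable[MeasurableSpace.comap (R v) inferInstance] (R v) :=
    Measurable.of_comap_le le_rfl
  exact h1.mono (le_iSup₂ (f := fun (v : List ℕ) (_ : v ∈ S) =>
    MeasurableSpace.comap (R v) inferInstance) v hv) le_rfl

lemma measurable_gg_coord (R : List ℕ → Ω → ℕ → ℝ) (p₀ : ℝ) {S : Set (List ℕ)}
    {v : List ℕ} (hv : v ∈ S) (i : ℕ) :
    Measurable[stmtMS R S] fun ω => stmtGG p₀ (R v ω i) :=
  (measurable_stmtGG p₀).comp ((measurable_pi_apply i).comp (measurable_R_stmtMS R hv))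

lemma measurable_stmtWF (R : List ℕ → Ω → ℕ → ℝ) (p₀ : ℝ) {S : Set (List ℕ)} {b u : List ℕ}
    (hS : ∀ k, k < u.length → b ++ u.take k ∈ S) :
    Measurable[stmtMS R S] (stmtWF R p₀ b u) :=
  Finset.measurable_prod _ fun k hk =>
    measurable_gg_coord R p₀ (hS k (Finset.mem_range.mp hk)) _

lemma measurable_stmtWF_amb (R : List ℕ → Ω → ℕ → ℝ) (hRmeas : ∀ u, Measurable (R u))
    (p₀ : ℝ) (b u : List ℕ) : Measurable (stmtWF R p₀ b u) :=
  (measurable_stmtWF R p₀ (S := Set.univ) (fun _ _ => trivial)).mono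
    (stmtMS_le R hRmeas _) le_rfl

lemma indep_stmtMS {P : MeasureTheory.Measure Ω} (R : List ℕ → Ω → ℕ → ℝ)
    (hRmeas : ∀ u, Measurable (R u))
    (hRindep : ProbabilityTheory.iIndepFun R P)
    {S T : Set (List ℕ)} (hST : Disjoint S T) :
    ProbabilityTheory.Indep (stmtMS R S) (stmtMS R T) P := by
  have h := (ProbabilityTheory.iIndepFun_iff_iIndep _ _ _).mp hRindep
  exact ProbabilityTheory.indep_iSup_of_disjoint
    (fun v => measurable_iff_comap_le.mp (hRmeas v)) h hST

lemma stmtWF_snoc (R : List ℕ → Ω → ℕ → ℝ) (p₀ : ℝ) (b u : List ℕ) (i : ℕ) (ω : Ω) :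
    stmtWF R p₀ b (u ++ [i]) ω = stmtWF R p₀ b u ω * stmtGG p₀ (R (b ++ u) ω i) := by
  unfold stmtWF
  rw [List.length_append, List.length_singleton, Finset.prod_range_succ]
  congr 1
  · refine Finset.prod_congr rfl fun k hk => ?_
    have hk' : k < u.length := Finset.mem_range.mp hk
    rw [List.take_append_of_le_length hk'.le, List.getD_append _ _ _ _ hk']
  · rw [List.take_append_of_le_length le_rfl, List.take_length,
      List.getD_append_right _ _ _ _ le_rfl]
    simp

lemma stmtWF_split (R : List ℕ → Ω → ℕ → ℝ) (p₀ : ℝ) (l d : List ℕ) (ω : Ω) :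
    stmtWF R p₀ List.nil (l ++ d) ω = stmtWF R p₀ List.nil l ω * stmtWF R p₀ l d ω := by
  unfold stmtWF
  rw [List.length_append, Finset.prod_range_add]
  congr 1
  · refine Finset.prod_congr rfl fun k hk => ?_
    have hk' : k < l.length := Finset.mem_range.mp hk
    rw [List.take_append_of_le_length hk'.le, List.getD_append _ _ _ _ hk']
  · refine Finset.prod_congr rfl fun k hk => ?_
    rw [List.take_append, List.getD_append_right _ _ _ _ (Nat.le_add_right _ _)]
    simp [List.take_of_length_le (Nat.le_add_right l.length k)]

lemma lintegral_stmtGG (P : MeasureTheory.Measure Ω) (ν : MeasureTheory.Measure PMSeq)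
    (R : List ℕ → Ω → ℕ → ℝ) (hRmeas : ∀ u, Measurable (R u))
    (hRdist : ∀ u, MeasureTheory.Measure.map (R u) P = ν) (p₀ : ℝ) (v : List ℕ) (i : ℕ) :
    ∫⁻ ω, stmtGG p₀ (R v ω i) ∂P = stmtEE ν p₀ i := by
  have hmeas : Measurable fun s : PMSeq => stmtGG p₀ (s i) :=
    (measurable_stmtGG p₀).comp (measurable_pi_apply i)
  rw [stmtEE, ← hRdist v, MeasureTheory.lintegral_map hmeas (hRmeas v)]

lemma lintegral_stmtWF (P : MeasureTheory.Measure Ω) [MeasureTheory.IsProbabilityMeasure P]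
    (ν : MeasureTheory.Measure PMSeq) (R : List ℕ → Ω → ℕ → ℝ)
    (hRmeas : ∀ u, Measurable (R u))
    (hRindep : ProbabilityTheory.iIndepFun R P)
    (hRdist : ∀ u, MeasureTheory.Measure.map (R u) P = ν) (p₀ : ℝ) (b u : List ℕ) :
    ∫⁻ ω, stmtWF R p₀ b u ω ∂P = stmtCC ν p₀ u := by
  induction u using List.reverseRecOn with
  | nil => simp [stmtWF, stmtCC]
  | append_singleton u i ih =>
    simp_rw [stmtWF_snoc R p₀ b u i]
    have hdisj : Disjoint {v : List ℕ | v.length < b.length + u.length}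
        ({b ++ u} : Set (List ℕ)) := by
      rw [Set.disjoint_singleton_right]
      simp
    have hind := indep_stmtMS (P := P) R hRmeas hRindep hdisj
    have hf : Measurable[stmtMS R {v : List ℕ | v.length < b.length + u.length}]
        (stmtWF R p₀ b u) := by
      refine measurable_stmtWF R p₀ fun k hk => ?_
      simp only [Set.mem_setOf_eq, List.length_append, List.length_take]
      omega
    have hg : Measurable[stmtMS R ({b ++ u} : Set (List ℕ))]
        fun ω => stmtGG p₀ (R (b ++ u) ω i) :=
      measurable_gg_coord R p₀ (Set.mem_singleton _) i
    rw [ProbabilityTheory.lintegral_mul_eq_lintegral_mul_lintegral_of_independent_measurableSpace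
      (stmtMS_le R hRmeas _) (stmtMS_le R hRmeas _) hind hf hg, ih,
      lintegral_stmtGG P ν R hRmeas hRdist p₀ _ i]
    simp [stmtCC]

lemma stmtWF_eq_ofReal (R : List ℕ → Ω → ℕ → ℝ) (p₀ : ℝ) (ω : Ω)
    (hω : ∀ v i, 0 ≤ R v ω i) (u : List ℕ) :
    stmtWF R p₀ List.nil u ω =
      ENNReal.ofReal (if (1 : ℝ) * ∏ k ∈ Finset.range u.length,
          R (u.take k) ω (u.getD k 0) = 0 then 0
        else ((1 : ℝ) * ∏ k ∈ Finset.range u.length, R (u.take k) ω (u.getD k 0)) ^ p₀) := by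
  rw [one_mul]
  by_cases h0 : ∃ k ∈ Finset.range u.length, R (u.take k) ω (u.getD k 0) = 0
  · obtain ⟨k, hk, hk0⟩ := h0
    have hxi0 : ∏ k ∈ Finset.range u.length, R (u.take k) ω (u.getD k 0) = 0 :=
      Finset.prod_eq_zero hk hk0
    rw [if_pos hxi0, ENNReal.ofReal_zero]
    unfold stmtWF
    refine Finset.prod_eq_zero hk ?_
    exact if_pos hk0
  · push_neg at h0
    have hpos : ∀ k ∈ Finset.range u.length, 0 < R (u.take k) ω (u.getD k 0) :=
      fun k hk => lt_of_le_of_ne (hω _ _) (Ne.symm (h0 k hk))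
    have hxipos : 0 < ∏ k ∈ Finset.range u.length, R (u.take k) ω (u.getD k 0) :=
      Finset.prod_pos hpos
    rw [if_neg (ne_of_gt hxipos),
      ← Real.finset_prod_rpow _ _ (fun k hk => (hpos k hk).le) _,
      ENNReal.ofReal_prod_of_nonneg (fun k hk => Real.rpow_nonneg (hpos k hk).le _)]
    refine Finset.prod_congr rfl fun k hk => ?_
    exact if_neg (h0 k hk)

lemma stmt_toReal_tsum_ofReal {ι : Type*} {t : ι → ℝ} (h : ∀ i, 0 ≤ t i)
    (hfin : (∑' i, ENNReal.ofReal (t i)) ≠ ⊤) :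
    (∑' i, ENNReal.ofReal (t i)).toReal = ∑' i, t i := by
  lift t to ι → ℝ≥0 using h with f hf
  simp_rw [ENNReal.ofReal_coe_nnreal] at hfin ⊢
  have hsum : Summable f := ENNReal.tsum_coe_ne_top_iff_summable.mp hfin
  rw [← ENNReal.coe_tsum hsum, ENNReal.coe_toReal, NNReal.coe_tsum]

end Aux2
/-- Under the Malthusian hypotheses and `m = ∫ #s ν(ds) < ∞`,
if `L ⪯ Q` are lines then `E[M_Q | H_L] ≤ M_L` almost surely. -/
theorem stmt13 {Ω : Type*} [MeasurableSpace Ω] (P : Measure Ω) [IsProbabilityMeasure P]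
    (ν : Measure PMSeq) [IsProbabilityMeasure ν] (hν : ∀ᵐ s ∂ν, IsPointSeq s)
    (R : List ℕ → Ω → ℕ → ℝ) (hRmeas : ∀ u, Measurable (R u))
    (hRindep : iIndepFun R P)
    (hRdist : ∀ u, Measure.map (R u) P = ν)
    (p₀ : ℝ) (hmal : MalthusHyp ν p₀)
    (hm : ∫⁻ s, (numAtoms s : ℝ≥0∞) ∂ν < ⊤)
    (L Q : Set (List ℕ)) (hL : IsLine L) (hQ : IsLine Q) (hLQ : LineLE L Q) :
    ∀ᵐ ω ∂P, (P[lineSum R p₀ Q | lineSigma R L]) ω ≤ lineSum R p₀ L ω := by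
  classical
  obtain ⟨⟨_, hLam1, _⟩, hp0pos, _, _⟩ := hmal
  have hee_meas : ∀ i : ℕ, Measurable fun s : PMSeq => stmtGG p₀ (s i) :=
    fun i => (measurable_stmtGG p₀).comp (measurable_pi_apply i)
  have hee_le : ∑' i, stmtEE ν p₀ i ≤ 1 := by
    have h : ∑' i, stmtEE ν p₀ i = Lam ν p₀ := by
      simp only [stmtEE]
      rw [Lam, ← lintegral_tsum fun i => (hee_meas i).aemeasurable]
      exact lintegral_congr fun s => rfl
    rw [h, hLam1]
  have hm_le : lineSigma R L ≤ (inferInstance : MeasurableSpace Ω) :=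
    stmtMS_le R hRmeas {v : List ℕ | ∃ l ∈ L, v <+: l ∧ v ≠ l}
  set F : Set (List ℕ) → Ω → ℝ≥0∞ :=
    fun S ω => ∑' u : S, stmtWF R p₀ List.nil u ω with hF
  have hFmeas : ∀ S : Set (List ℕ), Measurable (F S) := fun S =>
    Measurable.ennreal_tsum fun u => measurable_stmtWF_amb R hRmeas p₀ List.nil u
  have hWlint : ∀ u : List ℕ, ∫⁻ ω, stmtWF R p₀ List.nil u ω ∂P = stmtCC ν p₀ u :=
    fun u => lintegral_stmtWF P ν R hRmeas hRindep hRdist p₀ List.nil u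
  have hFlint : ∀ S : Set (List ℕ), IsLine S → ∫⁻ ω, F S ω ∂P ≤ 1 := by
    intro S hS
    have h1 : ∫⁻ ω, F S ω ∂P = ∑' u : S, stmtCC ν p₀ u := by
      simp only [hF]
      rw [lintegral_tsum fun u : S =>
        (measurable_stmtWF_amb R hRmeas p₀ List.nil u).aemeasurable]
      exact tsum_congr fun u => hWlint u
    rw [h1]
    exact stmt_tsum_prod_le_one _ hee_le (fun u : S => (u : List ℕ))
      Subtype.val_injective (fun i j h => hS _ i.2 _ j.2 h)
  have hkey : ∀ A : Set Ω, MeasurableSet[lineSigma R L] A → ∀ l ∈ L, ∀ d : List ℕ,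
      ∫⁻ ω in A, stmtWF R p₀ List.nil (l ++ d) ω ∂P =
        (∫⁻ ω in A, stmtWF R p₀ List.nil l ω ∂P) * stmtCC ν p₀ d := by
    intro A hA l hl d
    have hAamb : MeasurableSet A := hm_le A hA
    have hdisj : Disjoint {v : List ℕ | ∃ l' ∈ L, v <+: l' ∧ v ≠ l'}
        {v : List ℕ | l <+: v} := by
      rw [Set.disjoint_left]
      rintro v ⟨l', hl', hvl', hvne⟩ hlv
      have h1 : l = l' := hL l hl l' hl' (hlv.trans hvl')
      subst h1
      exact hvne (hvl'.eq_of_length (le_antisymm hvl'.length_le hlv.length_le))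
    have hind : Indep (stmtMS R {v : List ℕ | ∃ l' ∈ L, v <+: l' ∧ v ≠ l'})
        (stmtMS R {v : List ℕ | l <+: v}) P :=
      indep_stmtMS R hRmeas hRindep hdisj
    have hWl : Measurable[stmtMS R {v : List ℕ | ∃ l' ∈ L, v <+: l' ∧ v ≠ l'}]
        (stmtWF R p₀ List.nil l) := by
      refine measurable_stmtWF R p₀ fun k hk => ?_
      refine ⟨l, hl, ?_, ?_⟩
      · rw [List.nil_append]; exact List.take_prefix k l
      · rw [List.nil_append]
        intro hcon
        have h2 := congrArg List.length hcon
        rw [List.length_take] at h2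
        omega
    have hf1 : Measurable[stmtMS R {v : List ℕ | ∃ l' ∈ L, v <+: l' ∧ v ≠ l'}]
        (A.indicator (stmtWF R p₀ List.nil l)) := hWl.indicator hA
    have hWd : Measurable[stmtMS R {v : List ℕ | l <+: v}] (stmtWF R p₀ l d) := by
      refine measurable_stmtWF R p₀ fun k hk => ?_
      exact List.prefix_append l _
    have hsplit : ∀ ω, A.indicator (stmtWF R p₀ List.nil (l ++ d)) ω =
        A.indicator (stmtWF R p₀ List.nil l) ω * stmtWF R p₀ l d ω := by
      intro ω
      by_cases hω : ω ∈ A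
      · rw [Set.indicator_of_mem hω, Set.indicator_of_mem hω, stmtWF_split]
      · rw [Set.indicator_of_notMem hω, Set.indicator_of_notMem hω, zero_mul]
    rw [← lintegral_indicator hAamb, ← lintegral_indicator hAamb]
    calc ∫⁻ ω, A.indicator (stmtWF R p₀ List.nil (l ++ d)) ω ∂P
        = ∫⁻ ω, A.indicator (stmtWF R p₀ List.nil l) ω * stmtWF R p₀ l d ω ∂P :=
          lintegral_congr hsplit
      _ = (∫⁻ ω, A.indicator (stmtWF R p₀ List.nil l) ω ∂P) *
            ∫⁻ ω, stmtWF R p₀ l d ω ∂P :=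
          lintegral_mul_eq_lintegral_mul_lintegral_of_independent_measurableSpace
            (stmtMS_le R hRmeas _) (stmtMS_le R hRmeas _) hind hf1 hWd
      _ = _ := by rw [lintegral_stmtWF P ν R hRmeas hRindep hRdist p₀ l d]
  have hcore : ∀ A : Set Ω, MeasurableSet[lineSigma R L] A →
      ∫⁻ ω in A, F Q ω ∂P ≤ ∫⁻ ω in A, F L ω ∂P := by
    intro A hA
    have hpick : ∀ q : Q, ∃ l, l ∈ L ∧ l <+: (q : List ℕ) := fun q => by
      obtain ⟨l, hl, hlq⟩ := hLQ q q.2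
      exact ⟨l, hl, hlq⟩
    choose pick hπL hπpre using hpick
    set f : Q → ℝ≥0∞ :=
      fun q => ∫⁻ ω in A, stmtWF R p₀ List.nil q ω ∂P with hf
    have hterm : ∀ q : Q, f q =
        (∫⁻ ω in A, stmtWF R p₀ List.nil (pick q) ω ∂P) *
          stmtCC ν p₀ ((q : List ℕ).drop (pick q).length) := by
      intro q
      obtain ⟨d, hd⟩ := hπpre q
      simp only [hf]
      rw [← hd, List.drop_left]
      exact hkey A hA (pick q) (hπL q) d
    have h1 : ∫⁻ ω in A, F Q ω ∂P = ∑' q : Q, f q := by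
      simp only [hF, hf]
      exact lintegral_tsum fun u : Q =>
        (measurable_stmtWF_amb R hRmeas p₀ List.nil u).aemeasurable
    have h2 : ∫⁻ ω in A, F L ω ∂P =
        ∑' l : L, ∫⁻ ω in A, stmtWF R p₀ List.nil l ω ∂P := by
      simp only [hF]
      exact lintegral_tsum fun u : L =>
        (measurable_stmtWF_amb R hRmeas p₀ List.nil u).aemeasurable
    rw [h1, h2, ← ENNReal.tsum_fiberwise f pick]
    have hb : ∀ x : List ℕ, (∑' b : (pick ⁻¹' {x}), f ↑b) ≤
        Set.indicator L (fun y => ∫⁻ ω in A, stmtWF R p₀ List.nil y ω ∂P) x := by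
      intro x
      by_cases hx : x ∈ L
      · rw [Set.indicator_of_mem hx]
        have hdropeq : ∀ b : (pick ⁻¹' {x}),
            x ++ (((b : Q) : List ℕ).drop x.length) = ((b : Q) : List ℕ) := by
          rintro ⟨q, hq⟩
          have hqx : pick q = x := hq
          obtain ⟨d, hd⟩ := hπpre q
          rw [hqx] at hd
          simp only []
          rw [← hd, List.drop_left]
        have heq : ∀ b : (pick ⁻¹' {x}), f ↑b =
            (∫⁻ ω in A, stmtWF R p₀ List.nil x ω ∂P) *
              stmtCC ν p₀ (((b : Q) : List ℕ).drop x.length) := by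
          rintro ⟨q, hq⟩
          have hqx : pick q = x := hq
          rw [hterm q, hqx]
        rw [tsum_congr heq, ENNReal.tsum_mul_left]
        refine mul_le_of_le_one_right' ?_
        refine stmt_tsum_prod_le_one _ hee_le
          (fun b : (pick ⁻¹' {x}) => ((b : Q) : List ℕ).drop x.length) ?_ ?_
        · intro b1 b2 h
          have h' : ((b1 : Q) : List ℕ).drop x.length
              = ((b2 : Q) : List ℕ).drop x.length := h
          have h2' := hdropeq b1
          rw [h', hdropeq b2] at h2'
          exact Subtype.ext (Subtype.ext h2'.symm)
        · intro i j hpre2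
          have hpre3 : ((i : Q) : List ℕ).drop x.length
              <+: ((j : Q) : List ℕ).drop x.length := hpre2
          obtain ⟨r, hr⟩ := hpre3
          have hij : ((i : Q) : List ℕ) <+: ((j : Q) : List ℕ) := by
            refine ⟨r, ?_⟩
            rw [← hdropeq j, ← hr, ← List.append_assoc, hdropeq i]
          have hqq := hQ _ (i : Q).2 _ (j : Q).2 hij
          have h3 := (hdropeq i).trans hqq
          rw [← hdropeq j] at h3
          exact List.append_cancel_left h3
      · rw [Set.indicator_of_notMem hx]
        have hempty : IsEmpty (pick ⁻¹' {x} : Set Q) := by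
          refine ⟨?_⟩
          rintro ⟨q, hq⟩
          exact hx ((Set.mem_singleton_iff.mp hq) ▸ hπL q)
        haveI := hempty
        rw [tsum_empty]
    exact le_trans (ENNReal.tsum_le_tsum hb) (le_of_eq (tsum_subtype L _).symm)
  have hnn : ∀ᵐ ω ∂P, ∀ v : List ℕ, ∀ i : ℕ, 0 ≤ R v ω i := by
    rw [ae_all_iff]
    intro v
    rw [ae_all_iff]
    intro i
    have h1 : ∀ᵐ s ∂ν, 0 ≤ s i := hν.mono fun s hs => hs.1 i
    rw [← hRdist v] at h1
    exact ae_of_ae_map (hRmeas v).aemeasurable h1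
  have hFQtop : ∫⁻ ω, F Q ω ∂P ≠ ⊤ := ne_top_of_le_ne_top ENNReal.one_ne_top (hFlint Q hQ)
  have hFLtop : ∫⁻ ω, F L ω ∂P ≠ ⊤ := ne_top_of_le_ne_top ENNReal.one_ne_top (hFlint L hL)
  have hFQlt : ∀ᵐ ω ∂P, F Q ω < ⊤ := ae_lt_top (hFmeas Q) hFQtop
  have hFLlt : ∀ᵐ ω ∂P, F L ω < ⊤ := ae_lt_top (hFmeas L) hFLtop
  have hae_eq : ∀ S : Set (List ℕ), (∀ᵐ ω ∂P, F S ω < ⊤) →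
      lineSum R p₀ S =ᵐ[P] fun ω => (F S ω).toReal := by
    intro S hS
    filter_upwards [hnn, hS] with ω hω hlt
    have hterm : ∀ u : S, stmtWF R p₀ List.nil u ω =
        ENNReal.ofReal (if xi R 1 u ω = 0 then 0 else xi R 1 (u : List ℕ) ω ^ p₀) :=
      fun u => stmtWF_eq_ofReal R p₀ ω hω u
    have htnn : ∀ u : S,
        0 ≤ (if xi R 1 u ω = 0 then (0:ℝ) else xi R 1 (u : List ℕ) ω ^ p₀) := by
      intro u
      by_cases h : xi R 1 (u : List ℕ) ω = 0
      · rw [if_pos h]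
      · rw [if_neg h]
        refine Real.rpow_nonneg ?_ _
        have h4 : (0:ℝ) ≤ 1 * ∏ k ∈ Finset.range (u : List ℕ).length,
            R ((u : List ℕ).take k) ω ((u : List ℕ).getD k 0) := by
          rw [one_mul]
          exact Finset.prod_nonneg fun k _ => hω _ _
        exact h4
    have hFeq : F S ω = ∑' u : S, ENNReal.ofReal
        (if xi R 1 u ω = 0 then 0 else xi R 1 (u : List ℕ) ω ^ p₀) := by
      simp only [hF]
      exact tsum_congr hterm
    show lineSum R p₀ S ω = (F S ω).toReal
    rw [hFeq]
    exact (stmt_toReal_tsum_ofReal htnn (by rw [← hFeq]; exact hlt.ne)).symm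
  have hg'int : Integrable (fun ω => (F L ω).toReal) P :=
    integrable_toReal_of_lintegral_ne_top (hFmeas L).aemeasurable hFLtop
  have hQint : Integrable (lineSum R p₀ Q) P :=
    (integrable_toReal_of_lintegral_ne_top (hFmeas Q).aemeasurable hFQtop).congr
      (hae_eq Q hFQlt).symm
  have hFLm : Measurable[lineSigma R L] (F L) := by
    simp only [hF]
    refine Measurable.ennreal_tsum fun l => ?_
    refine measurable_stmtWF (S := {v : List ℕ | ∃ l' ∈ L, v <+: l' ∧ v ≠ l'})
      R p₀ fun k hk => ?_
    refine ⟨(l : List ℕ), l.2, ?_, ?_⟩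
    · rw [List.nil_append]; exact List.take_prefix k _
    · rw [List.nil_append]
      intro hcon
      have h2 := congrArg List.length hcon
      rw [List.length_take] at h2
      omega
  have hcondm : StronglyMeasurable[lineSigma R L] (P[lineSum R p₀ Q|lineSigma R L]) :=
    stronglyMeasurable_condExp
  have hcondint : Integrable (P[lineSum R p₀ Q|lineSigma R L]) P := integrable_condExp
  have hg'm : StronglyMeasurable[lineSigma R L] (fun ω => (F L ω).toReal) :=
    (ENNReal.measurable_toReal.comp hFLm).stronglyMeasurable
  have hDm : StronglyMeasurable[lineSigma R L]
      (fun ω => (F L ω).toReal - (P[lineSum R p₀ Q|lineSigma R L]) ω) := hg'm.sub hcondm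
  have hDint : Integrable
      (fun ω => (F L ω).toReal - (P[lineSum R p₀ Q|lineSigma R L]) ω) P :=
    hg'int.sub hcondint
  have hset : ∀ s : Set Ω, MeasurableSet[lineSigma R L] s →
      0 ≤ ∫ ω in s, ((F L ω).toReal - (P[lineSum R p₀ Q|lineSigma R L]) ω) ∂P := by
    intro s hs
    rw [integral_sub hg'int.integrableOn hcondint.integrableOn, sub_nonneg,
      setIntegral_condExp hm_le hQint hs]
    have hi3 : ∫ ω in s, lineSum R p₀ Q ω ∂P = (∫⁻ ω in s, F Q ω ∂P).toReal := by
      rw [integral_congr_ae (ae_restrict_of_ae (hae_eq Q hFQlt))]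
      exact integral_toReal ((hFmeas Q).aemeasurable.restrict) (ae_restrict_of_ae hFQlt)
    have hi4 : ∫ ω in s, (F L ω).toReal ∂P = (∫⁻ ω in s, F L ω ∂P).toReal :=
      integral_toReal ((hFmeas L).aemeasurable.restrict) (ae_restrict_of_ae hFLlt)
    rw [hi3, hi4]
    refine ENNReal.toReal_mono ?_ (hcore s hs)
    exact ne_top_of_le_ne_top hFLtop (setLIntegral_le_lintegral _ _)
  have h0 : (0 : Ω → ℝ) ≤ᵐ[P.trim hm_le]
      fun ω => (F L ω).toReal - (P[lineSum R p₀ Q|lineSigma R L]) ω := by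
    refine ae_nonneg_of_forall_setIntegral_nonneg (hDint.trim hm_le hDm) ?_
    intro s hs _
    rw [← setIntegral_trim hm_le hDm hs]
    exact hset s hs
  have h0' := ae_of_ae_trim hm_le h0
  filter_upwards [h0', hae_eq L hFLlt] with ω h1 h2
  rw [h2]
  simp only [Pi.zero_apply] at h1
  linarith
end

section
/- Under the Malthusian hypotheses and assuming m := ∫_ℛ #s ν(ds) < ∞, for the cascade started from x = 1: if L and Q are lines in 𝒰 such that Q covers L and |Q| := sup_{u∈Q} |u| < ∞, then E[M_Q | H_L] = M_L almost surely, where M_Q = ∑_{u∈Q} ξ_u^{p_0}. -/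
open MeasureTheory ProbabilityTheory Filter Real
open scoped ENNReal NNReal Topology

variable {Ω : Type*}

section Stmt14Aux

open MeasureTheory ProbabilityTheory
open scoped ENNReal Classical

namespace Stmt14

/-- The elementary weight `φ(x) = x^{p₀}` guarded at `0`, valued in `ℝ≥0∞`. -/
noncomputable def phi (p : ℝ) (x : ℝ) : ℝ≥0∞ := if x = 0 then 0 else ENNReal.ofReal (x ^ p)

lemma phi_ne_top (p x : ℝ) : phi p x ≠ ∞ := by
  unfold phi; split <;> simp

lemma measurable_phi {p : ℝ} (hp : 0 ≤ p) : Measurable (phi p) :=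
  Measurable.ite measurableSet_eq measurable_const
    (ENNReal.measurable_ofReal.comp (Real.continuous_rpow_const hp).measurable)

/-- The deterministic weight of a word: product of `a` over its letters. -/
noncomputable def wA (a : ℕ → ℝ≥0∞) (u : List ℕ) : ℝ≥0∞ :=
  ∏ k ∈ Finset.range u.length, a (u.getD k 0)

lemma wA_nil (a : ℕ → ℝ≥0∞) : wA a List.nil = 1 := by simp [wA]

lemma wA_cons (a : ℕ → ℝ≥0∞) (i : ℕ) (u : List ℕ) : wA a (i :: u) = a i * wA a u := by
  rw [wA, List.length_cons, Finset.prod_range_succ', List.getD_cons_zero, mul_comm]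
  simp only [wA, List.getD_cons_succ]

lemma sum_of_nil_mem {a : ℕ → ℝ≥0∞} {D : Set (List ℕ)} (hline : IsLine D)
    (h0 : ([] : List ℕ) ∈ D) :
    (∑' w : List ℕ, if w ∈ D then wA a w else 0) = 1 := by
  have h : ∀ b : List ℕ, b ≠ [] → (if b ∈ D then wA a b else 0) = 0 := fun b hb =>
    if_neg fun hbD => hb (hline List.nil h0 b hbD List.nil_prefix).symm
  rw [tsum_eq_single ([] : List ℕ) h, if_pos h0, wA_nil]

/-- Core deterministic identity: a line covering the root with bounded length
has total weight `1`, provided `∑ a = 1`. -/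
lemma det_sum {a : ℕ → ℝ≥0∞} (ha : (∑' i, a i) = 1) :
    ∀ (N : ℕ) (D : Set (List ℕ)), IsLine D →
      (∀ w : List ℕ, (∃ d ∈ D, d <+: w) ∨ (∃ d ∈ D, w <+: d)) →
      (∀ d ∈ D, d.length ≤ N) →
      (∑' w : List ℕ, if w ∈ D then wA a w else 0) = 1 := by
  intro N
  induction N with
  | zero =>
    intro D hline hcov hlen
    have h0 : ([] : List ℕ) ∈ D := by
      rcases hcov List.nil with ⟨d, hd, hp⟩ | ⟨d, hd, -⟩
      · rwa [List.prefix_nil.mp hp] at hd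
      · rwa [List.length_eq_zero_iff.mp (Nat.le_zero.mp (hlen d hd))] at hd
    exact sum_of_nil_mem hline h0
  | succ N ih =>
    intro D hline hcov hlen
    by_cases h0 : ([] : List ℕ) ∈ D
    · exact sum_of_nil_mem hline h0
    have key : ∀ i : ℕ,
        (∑' w : List ℕ, if w ∈ {w : List ℕ | i :: w ∈ D} then wA a w else 0) = 1 := by
      intro i
      refine ih _ ?_ ?_ ?_
      · intro u hu v hv huv
        have h := hline (i :: u) hu (i :: v) hv (List.cons_prefix_cons.mpr ⟨rfl, huv⟩)
        injection h
      · intro w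
        rcases hcov (i :: w) with ⟨d, hd, hp⟩ | ⟨d, hd, hp⟩
        · match d, hp, hd with
          | [], _, hd => exact absurd hd h0
          | j :: d', hp, hd =>
            obtain ⟨rfl, hp'⟩ := List.cons_prefix_cons.mp hp
            exact Or.inl ⟨d', hd, hp'⟩
        · match d, hp, hd with
          | [], hp, _ => exact (List.cons_ne_nil i w (List.prefix_nil.mp hp)).elim
          | j :: d', hp, hd =>
            obtain ⟨rfl, hp'⟩ := List.cons_prefix_cons.mp hp
            exact Or.inr ⟨d', hd, hp'⟩
      · intro d hd
        have h := hlen (i :: d) hd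
        rw [List.length_cons] at h
        omega
    have hre : (∑' w : List ℕ, if w ∈ D then wA a w else 0)
        = ∑' p : ℕ × List ℕ, (if p.1 :: p.2 ∈ D then wA a (p.1 :: p.2) else 0) := by
      refine (Function.Injective.tsum_eq (g := fun p : ℕ × List ℕ => p.1 :: p.2) ?_ ?_).symm
      · intro p q h
        injection h with h1 h2
        exact Prod.ext h1 h2
      · intro u hu
        rw [Function.mem_support] at hu
        match u with
        | [] => exact absurd (if_neg h0) hu
        | j :: u' => exact ⟨(j, u'), rfl⟩
    rw [hre, ENNReal.tsum_prod']
    have hinner : ∀ i : ℕ,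
        (∑' w : List ℕ, if i :: w ∈ D then wA a (i :: w) else 0) = a i := by
      intro i
      have h : ∀ w : List ℕ, (if i :: w ∈ D then wA a (i :: w) else 0)
          = a i * (if w ∈ {w : List ℕ | i :: w ∈ D} then wA a w else 0) := by
        intro w
        simp only [Set.mem_setOf_eq]
        by_cases hw : i :: w ∈ D
        · rw [if_pos hw, if_pos hw, wA_cons]
        · rw [if_neg hw, if_neg hw, mul_zero]
      rw [tsum_congr h, ENNReal.tsum_mul_left, key i, mul_one]
    rw [tsum_congr hinner, ha]

lemma slice_sum {a : ℕ → ℝ≥0∞} (ha : (∑' i, a i) = 1) :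
    ∀ n : ℕ, (∑' u : List ℕ, if u.length = n then wA a u else 0) = 1 := by
  intro n
  induction n with
  | zero =>
    have h : ∀ b : List ℕ, b ≠ [] → (if b.length = 0 then wA a b else 0) = 0 := by
      intro b hb
      rw [if_neg (fun h => hb (List.length_eq_zero_iff.mp h))]
    rw [tsum_eq_single ([] : List ℕ) h]
    simp [wA_nil]
  | succ n ih =>
    have hre : (∑' u : List ℕ, if u.length = n + 1 then wA a u else 0)
        = ∑' p : ℕ × List ℕ, (if (p.1 :: p.2).length = n + 1 then wA a (p.1 :: p.2) else 0) := by
      refine (Function.Injective.tsum_eq (g := fun p : ℕ × List ℕ => p.1 :: p.2) ?_ ?_).symm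
      · intro p q h
        injection h with h1 h2
        exact Prod.ext h1 h2
      · intro u hu
        rw [Function.mem_support] at hu
        match u with
        | [] => simp at hu
        | j :: u' => exact ⟨(j, u'), rfl⟩
    rw [hre, ENNReal.tsum_prod']
    have hinner : ∀ i : ℕ,
        (∑' w : List ℕ, if (i :: w).length = n + 1 then wA a (i :: w) else 0) = a i := by
      intro i
      have h : ∀ w : List ℕ, (if (i :: w).length = n + 1 then wA a (i :: w) else 0)
          = a i * (if w.length = n then wA a w else 0) := by
        intro w
        by_cases hw : w.length = n
        · rw [if_pos (by simp [hw]), if_pos hw, wA_cons]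
        · rw [if_neg (by simp [hw]), if_neg hw, mul_zero]
      rw [tsum_congr h, ENNReal.tsum_mul_left, ih, mul_one]
    rw [tsum_congr hinner, ha]

lemma line_sum_le {a : ℕ → ℝ≥0∞} (ha : (∑' i, a i) = 1) (L : Set (List ℕ)) (N : ℕ)
    (hlen : ∀ l ∈ L, l.length ≤ N) :
    (∑' u : List ℕ, if u ∈ L then wA a u else 0) ≤ ((N : ℝ≥0∞) + 1) := by
  have hpt : ∀ u : List ℕ, (if u ∈ L then wA a u else 0)
      ≤ ∑ n ∈ Finset.range (N + 1), (if u.length = n then wA a u else 0) := by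
    intro u
    by_cases hu : u ∈ L
    · rw [if_pos hu]
      have hmem : u.length ∈ Finset.range (N + 1) :=
        Finset.mem_range.mpr (Nat.lt_succ_of_le (hlen u hu))
      have h := Finset.single_le_sum (f := fun n => if u.length = n then wA a u else 0)
        (fun i _ => zero_le) hmem
      simpa using h
    · rw [if_neg hu]
      exact zero_le
  calc (∑' u : List ℕ, if u ∈ L then wA a u else 0)
      ≤ ∑' u : List ℕ, ∑ n ∈ Finset.range (N + 1), (if u.length = n then wA a u else 0) :=
        Summable.tsum_le_tsum hpt ENNReal.summable ENNReal.summable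
    _ = ∑ n ∈ Finset.range (N + 1), ∑' u : List ℕ, (if u.length = n then wA a u else 0) :=
        Summable.tsum_finsetSum fun _ _ => ENNReal.summable
    _ = ((N : ℝ≥0∞) + 1) := by
        rw [Finset.sum_congr rfl fun n _ => slice_sum ha n]
        simp [Finset.sum_const]

end Stmt14

end Stmt14Aux
section Stmt14Prob

open MeasureTheory ProbabilityTheory
open scoped ENNReal Classical

namespace Stmt14

variable {Ω : Type*} [mΩ : MeasurableSpace Ω] {P : Measure Ω} [IsProbabilityMeasure P]
  {ν : Measure PMSeq} [IsProbabilityMeasure ν]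
  {R : List ℕ → Ω → ℕ → ℝ} {p₀ : ℝ}

/-- Partial cascade weight along the word `w` grafted at `l`. -/
noncomputable def TlE (R : List ℕ → Ω → ℕ → ℝ) (p₀ : ℝ) (l w : List ℕ) (ω : Ω) : ℝ≥0∞ :=
  ∏ k ∈ Finset.range w.length, phi p₀ (R (l ++ w.take k) ω (w.getD k 0))

noncomputable def aW (ν : Measure PMSeq) (p₀ : ℝ) (i : ℕ) : ℝ≥0∞ :=
  ∫⁻ s, phi p₀ (s i) ∂ν

noncomputable def YlE (R : List ℕ → Ω → ℕ → ℝ) (p₀ : ℝ) (Q : Set (List ℕ)) (l : List ℕ)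
    (ω : Ω) : ℝ≥0∞ :=
  ∑' w : List ℕ, if l ++ w ∈ Q then TlE R p₀ l w ω else 0

lemma TlE_ne_top (l w : List ℕ) (ω : Ω) : TlE R p₀ l w ω ≠ ∞ :=
  ENNReal.prod_ne_top fun _ _ => phi_ne_top _ _

lemma measurable_TlE (hRmeas : ∀ u, Measurable (R u)) (hp : 0 ≤ p₀) (l w : List ℕ) :
    Measurable (TlE R p₀ l w) :=
  Finset.measurable_prod _ fun k _ =>
    (measurable_phi hp).comp ((measurable_pi_apply _).comp (hRmeas _))

lemma measurable_TlE_sup (hRmeas : ∀ u, Measurable (R u)) (hp : 0 ≤ p₀)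
    {p : List ℕ → Prop} {l w : List ℕ} (hV : ∀ k, k < w.length → p (l ++ w.take k)) :
    Measurable[⨆ (v : List ℕ) (_ : p v), MeasurableSpace.comap (R v) inferInstance]
      (TlE R p₀ l w) := by
  refine Finset.measurable_prod
    (m := ⨆ (v : List ℕ) (_ : p v), MeasurableSpace.comap (R v) inferInstance) _ ?_
  intro k hk
  have h1 : Measurable[⨆ (v : List ℕ) (_ : p v), MeasurableSpace.comap (R v) inferInstance]
      (R (l ++ w.take k)) :=
    Measurable.of_comap_le
      (le_iSup₂ (f := fun (v : List ℕ) (_ : p v) =>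
        MeasurableSpace.comap (R v) (inferInstance : MeasurableSpace (ℕ → ℝ)))
        (l ++ w.take k) (hV k (Finset.mem_range.mp hk)))
  exact (measurable_phi hp).comp ((measurable_pi_apply _).comp h1)

lemma measurable_YlE (hRmeas : ∀ u, Measurable (R u)) (hp : 0 ≤ p₀) (Q : Set (List ℕ))
    (l : List ℕ) : Measurable (YlE R p₀ Q l) := by
  refine Measurable.ennreal_tsum fun w => ?_
  by_cases hw : l ++ w ∈ Q
  · simp only [if_pos hw]; exact measurable_TlE hRmeas hp l w
  · simp only [if_neg hw]; exact measurable_const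

lemma lintegral_phi_eq (hRmeas : ∀ u, Measurable (R u))
    (hRdist : ∀ u, Measure.map (R u) P = ν) (hp : 0 ≤ p₀) (v : List ℕ) (i : ℕ) :
    ∫⁻ ω, phi p₀ (R v ω i) ∂P = aW ν p₀ i := by
  rw [aW, ← hRdist v,
    lintegral_map (f := fun s : PMSeq => phi p₀ (s i))
      ((measurable_phi hp).comp (measurable_pi_apply i)) (hRmeas v)]

lemma tsum_aW (hp : 0 ≤ p₀) (hLam : Lam ν p₀ = 1) : (∑' i, aW ν p₀ i) = 1 := by
  rw [← hLam, Lam]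
  simp only [aW]
  rw [← lintegral_tsum (f := fun (i : ℕ) (s : PMSeq) => phi p₀ (s i))
    (fun i => ((measurable_phi hp).comp (measurable_pi_apply i)).aemeasurable)]
  exact lintegral_congr fun s => tsum_congr fun i => by simp [phi, powSum]

lemma indep_compl (hRindep : iIndepFun R P)
    (hRmeas : ∀ u, Measurable (R u)) (p : List ℕ → Prop) :
    Indep (⨆ (v : List ℕ) (_ : p v), MeasurableSpace.comap (R v) inferInstance)
      (⨆ (v : List ℕ) (_ : ¬ p v), MeasurableSpace.comap (R v) inferInstance) P :=
  indep_biSup_compl (fun v => (hRmeas v).comap_le) hRindep.iIndep {v | p v}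

lemma lintegral_TlE (hRmeas : ∀ u, Measurable (R u))
    (hRindep : iIndepFun R P)
    (hRdist : ∀ u, Measure.map (R u) P = ν) (hp : 0 ≤ p₀) :
    ∀ w l : List ℕ, ∫⁻ ω, TlE R p₀ l w ω ∂P = wA (aW ν p₀) w := by
  intro w
  induction w with
  | nil => intro l; simp [TlE, wA_nil, lintegral_const]
  | cons j w ih =>
    intro l
    have hsplit : ∀ ω, TlE R p₀ l (j :: w) ω = phi p₀ (R l ω j) * TlE R p₀ (l ++ [j]) w ω := by
      intro ω
      rw [TlE, List.length_cons, Finset.prod_range_succ', mul_comm]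
      congr 1
      · rw [List.take_zero, List.append_nil, List.getD_cons_zero]
      · rw [TlE]
        refine Finset.prod_congr rfl fun k _ => ?_
        rw [List.take_succ_cons, List.getD_cons_succ, List.append_cons]
    have hindep : Indep (MeasurableSpace.comap (R l) inferInstance)
        (⨆ (v : List ℕ) (_ : ¬ v = l), MeasurableSpace.comap (R v) inferInstance) P := by
      have h := indep_compl hRindep hRmeas (fun v => v = l)
      rwa [iSup_iSup_eq_left] at h
    have hf : Measurable[MeasurableSpace.comap (R l) inferInstance]
        (fun ω => phi p₀ (R l ω j)) :=
      (measurable_phi hp).comp ((measurable_pi_apply j).comp (Measurable.of_comap_le le_rfl))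
    have hg : Measurable[⨆ (v : List ℕ) (_ : ¬ v = l), MeasurableSpace.comap (R v)
        inferInstance] (TlE R p₀ (l ++ [j]) w) := by
      refine measurable_TlE_sup hRmeas hp ?_
      intro k hk h
      have hlen := congrArg List.length h
      simp only [List.length_append, List.length_take, List.length_cons] at hlen
      omega
    have hmul := lintegral_mul_eq_lintegral_mul_lintegral_of_independent_measurableSpace
      ((hRmeas l).comap_le) (iSup₂_le fun v _ => (hRmeas v).comap_le) hindep hf hg
      (μ := P)
    rw [lintegral_congr hsplit, hmul, lintegral_phi_eq hRmeas hRdist hp l j, ih (l ++ [j]),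
      wA_cons]

lemma TlE_append (l w : List ℕ) (ω : Ω) :
    TlE R p₀ List.nil (l ++ w) ω = TlE R p₀ List.nil l ω * TlE R p₀ l w ω := by
  rw [TlE, List.length_append, Finset.prod_range_add]
  congr 1
  · rw [TlE]
    refine Finset.prod_congr rfl fun k hk => ?_
    have hk' : k < l.length := Finset.mem_range.mp hk
    rw [List.nil_append, List.nil_append, List.take_append,
      Nat.sub_eq_zero_of_le hk'.le, List.take_zero, List.append_nil,
      List.getD_append _ _ _ _ hk']
  · rw [TlE]
    refine Finset.prod_congr rfl fun k _ => ?_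
    rw [List.nil_append, List.take_append,
      List.take_of_length_le (Nat.le_add_right _ _), Nat.add_sub_cancel_left,
      List.getD_append_right _ _ _ _ (Nat.le_add_right _ _), Nat.add_sub_cancel_left]

end Stmt14

end Stmt14Prob
section Stmt14Key

open MeasureTheory ProbabilityTheory
open scoped ENNReal Classical

namespace Stmt14

variable {Ω : Type*} [mΩ : MeasurableSpace Ω] {P : Measure Ω} [IsProbabilityMeasure P]
  {ν : Measure PMSeq} [IsProbabilityMeasure ν]
  {R : List ℕ → Ω → ℕ → ℝ} {p₀ : ℝ}

/-- Pointwise decomposition of the mass of the line `Q` over its `L`-ancestors. -/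
lemma Q_decomp {L Q : Set (List ℕ)} (hL : IsLine L) (hcov : Covers L Q) (ω : Ω) :
    (∑' u : List ℕ, if u ∈ Q then TlE R p₀ List.nil u ω else 0)
      = ∑' l : List ℕ, (if l ∈ L then TlE R p₀ List.nil l ω * YlE R p₀ Q l ω else 0) := by
  have step1 : ∀ u : List ℕ, (if u ∈ Q then TlE R p₀ List.nil u ω else 0)
      = ∑' l : List ℕ, (if l ∈ L ∧ l <+: u ∧ u ∈ Q then TlE R p₀ List.nil u ω else 0) := by
    intro u
    by_cases hu : u ∈ Q
    · obtain ⟨l₀, hl₀, hpre₀⟩ := hcov.1 u hu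
      have huniq : ∀ b : List ℕ, b ≠ l₀ →
          (if b ∈ L ∧ b <+: u ∧ u ∈ Q then TlE R p₀ List.nil u ω else 0) = 0 := by
        intro b hb
        rw [if_neg]
        rintro ⟨hbL, hbu, -⟩
        rcases List.prefix_or_prefix_of_prefix hbu hpre₀ with h | h
        · exact hb (hL b hbL l₀ hl₀ h)
        · exact hb (hL l₀ hl₀ b hbL h).symm
      rw [tsum_eq_single l₀ huniq, if_pos hu,
        if_pos (show l₀ ∈ L ∧ l₀ <+: u ∧ u ∈ Q from ⟨hl₀, hpre₀, hu⟩)]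
    · rw [if_neg hu]
      have h : ∀ l : List ℕ,
          (if l ∈ L ∧ l <+: u ∧ u ∈ Q then TlE R p₀ List.nil u ω else 0) = 0 :=
        fun l => if_neg fun h => hu h.2.2
      rw [tsum_congr h, tsum_zero]
  rw [tsum_congr step1, ENNReal.tsum_comm]
  refine tsum_congr fun l => ?_
  by_cases hl : l ∈ L
  · rw [if_pos hl]
    have hre : (∑' u : List ℕ, if l ∈ L ∧ l <+: u ∧ u ∈ Q then TlE R p₀ List.nil u ω else 0)
        = ∑' w : List ℕ,
            (if l ∈ L ∧ l <+: (l ++ w) ∧ (l ++ w) ∈ Q then TlE R p₀ List.nil (l ++ w) ω else 0) := by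
      refine (Function.Injective.tsum_eq (g := fun w : List ℕ => l ++ w)
        (fun x y h => List.append_cancel_left h) ?_).symm
      intro u hu
      rw [Function.mem_support] at hu
      have hpre : l <+: u := by
        by_contra hcon
        exact hu (if_neg fun h => hcon h.2.1)
      obtain ⟨t, rfl⟩ := hpre
      exact ⟨t, rfl⟩
    rw [hre]
    have h2 : ∀ w : List ℕ,
        (if l ∈ L ∧ l <+: (l ++ w) ∧ (l ++ w) ∈ Q then TlE R p₀ List.nil (l ++ w) ω else 0)
          = TlE R p₀ List.nil l ω * (if (l ++ w) ∈ Q then TlE R p₀ l w ω else 0) := by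
      intro w
      by_cases hw : (l ++ w) ∈ Q
      · rw [if_pos ⟨hl, List.prefix_append l w, hw⟩, if_pos hw, TlE_append]
      · rw [if_neg (fun h => hw h.2.2), if_neg hw, mul_zero]
    rw [tsum_congr h2, ENNReal.tsum_mul_left, YlE]
  · rw [if_neg hl]
    have h : ∀ u : List ℕ,
        (if l ∈ L ∧ l <+: u ∧ u ∈ Q then TlE R p₀ List.nil u ω else 0) = 0 :=
      fun u => if_neg fun h => hl h.1
    rw [tsum_congr h, tsum_zero]

/-- The mean of `Y_l` is `1`. -/
lemma lintegral_YlE (hRmeas : ∀ u, Measurable (R u))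
    (hRindep : iIndepFun R P)
    (hRdist : ∀ u, Measure.map (R u) P = ν)
    (hp : 0 ≤ p₀) (hLam : Lam ν p₀ = 1)
    {L Q : Set (List ℕ)} (hL : IsLine L) (hQ : IsLine Q) (hcov : Covers L Q)
    {N : ℕ} (hfin : ∀ u ∈ Q, u.length ≤ N)
    {l : List ℕ} (hl : l ∈ L) :
    ∫⁻ ω, YlE R p₀ Q l ω ∂P = 1 := by
  have hmeas : ∀ w : List ℕ,
      AEMeasurable (fun ω => if l ++ w ∈ Q then TlE R p₀ l w ω else 0) P := by
    intro w
    by_cases hw : l ++ w ∈ Q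
    · simp only [if_pos hw]; exact (measurable_TlE hRmeas hp l w).aemeasurable
    · simp only [if_neg hw]; exact aemeasurable_const
  simp only [YlE]
  rw [lintegral_tsum hmeas]
  have hterm : ∀ w : List ℕ,
      (∫⁻ ω, (if l ++ w ∈ Q then TlE R p₀ l w ω else 0) ∂P)
        = (if w ∈ {w : List ℕ | l ++ w ∈ Q} then wA (aW ν p₀) w else 0) := by
    intro w
    simp only [Set.mem_setOf_eq]
    by_cases hw : l ++ w ∈ Q
    · simp only [if_pos hw]
      exact lintegral_TlE hRmeas hRindep hRdist hp w l
    · simp only [if_neg hw, lintegral_zero]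
  rw [tsum_congr hterm]
  refine det_sum (tsum_aW hp hLam) N {w : List ℕ | l ++ w ∈ Q} ?_ ?_ ?_
  · intro u hu v hv huv
    obtain ⟨t, ht⟩ := huv
    have hpre : l ++ u <+: l ++ v := ⟨t, by rw [List.append_assoc, ht]⟩
    exact List.append_cancel_left (hQ _ hu _ hv hpre)
  · intro w
    rcases hcov.2 (l ++ w) ⟨l, hl, List.prefix_append l w⟩ with ⟨q, hq, hpre⟩ | ⟨q, hq, hpre⟩
    · obtain ⟨l', hl', hpre'⟩ := hcov.1 q hq
      have hcomp : l' = l := by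
        rcases List.prefix_or_prefix_of_prefix (hpre'.trans hpre)
          (List.prefix_append l w) with h | h
        · exact hL l' hl' l hl h
        · exact (hL l hl l' hl' h).symm
      subst hcomp
      obtain ⟨w', rfl⟩ := hpre'
      refine Or.inl ⟨w', hq, ?_⟩
      obtain ⟨t, ht⟩ := hpre
      exact ⟨t, List.append_cancel_left (by rw [← List.append_assoc, ht])⟩
    · have hlq : l <+: q := (List.prefix_append l w).trans hpre
      obtain ⟨w'', rfl⟩ := hlq
      refine Or.inr ⟨w'', hq, ?_⟩
      obtain ⟨t, ht⟩ := hpre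
      exact ⟨t, List.append_cancel_left (by rw [← List.append_assoc, ht])⟩
  · intro d hd
    have h := hfin (l ++ d) hd
    rw [List.length_append] at h
    omega

/-- Key identity: the set-integral of the `Q`-mass over any pre-`L`-measurable
set equals that of the `L`-mass. -/
lemma key_lintegral (hRmeas : ∀ u, Measurable (R u))
    (hRindep : iIndepFun R P)
    (hRdist : ∀ u, Measure.map (R u) P = ν)
    (hp : 0 ≤ p₀) (hLam : Lam ν p₀ = 1)
    {L Q : Set (List ℕ)} (hL : IsLine L) (hQ : IsLine Q) (hcov : Covers L Q)
    {N : ℕ} (hfin : ∀ u ∈ Q, u.length ≤ N)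
    {S : Set Ω} (hS : MeasurableSet[lineSigma R L] S) :
    ∫⁻ ω, S.indicator (fun _ => (1:ℝ≥0∞)) ω
        * (∑' u : List ℕ, if u ∈ Q then TlE R p₀ List.nil u ω else 0) ∂P
      = ∫⁻ ω, S.indicator (fun _ => (1:ℝ≥0∞)) ω
        * (∑' u : List ℕ, if u ∈ L then TlE R p₀ List.nil u ω else 0) ∂P := by
  have hMf_le : lineSigma R L ≤ mΩ := iSup₂_le fun v _ => (hRmeas v).comap_le
  have hMg_le : (⨆ (v : List ℕ) (_ : ¬ ∃ l' ∈ L, v <+: l' ∧ v ≠ l'),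
      MeasurableSpace.comap (R v) inferInstance) ≤ mΩ :=
    iSup₂_le fun v _ => (hRmeas v).comap_le
  have hindep : Indep (lineSigma R L)
      (⨆ (v : List ℕ) (_ : ¬ ∃ l' ∈ L, v <+: l' ∧ v ≠ l'),
        MeasurableSpace.comap (R v) inferInstance) P :=
    indep_compl hRindep hRmeas (fun v => ∃ l' ∈ L, v <+: l' ∧ v ≠ l')
  have hmeas_ind : Measurable[lineSigma R L] (S.indicator (fun _ => (1:ℝ≥0∞))) :=
    measurable_const.indicator hS
  have hxiE_meas : ∀ l, l ∈ L → Measurable[lineSigma R L] (TlE R p₀ List.nil l) := by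
    intro l hl
    refine measurable_TlE_sup hRmeas hp ?_
    intro k hk
    refine ⟨l, hl, ?_, ?_⟩
    · rw [List.nil_append]; exact List.take_prefix k l
    · intro h
      have hlen := congrArg List.length h
      rw [List.nil_append, List.length_take] at hlen
      omega
  have hYl_meas : ∀ l, l ∈ L →
      Measurable[⨆ (v : List ℕ) (_ : ¬ ∃ l' ∈ L, v <+: l' ∧ v ≠ l'),
        MeasurableSpace.comap (R v) inferInstance] (YlE R p₀ Q l) := by
    intro l hl
    refine Measurable.ennreal_tsum fun w => ?_
    by_cases hw : l ++ w ∈ Q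
    · simp only [if_pos hw]
      refine measurable_TlE_sup hRmeas hp ?_
      intro k hk
      rintro ⟨l', hl', hpre, hne⟩
      have hlv : l <+: l ++ w.take k := List.prefix_append _ _
      have h1 : l = l' := hL l hl l' hl' (hlv.trans hpre)
      subst h1
      exact hne (hpre.eq_of_length (Nat.le_antisymm hpre.length_le hlv.length_le))
    · simp only [if_neg hw]; exact measurable_const
  have hYl : ∀ l, l ∈ L → ∫⁻ ω, YlE R p₀ Q l ω ∂P = 1 :=
    fun l hl => lintegral_YlE hRmeas hRindep hRdist hp hLam hL hQ hcov hfin hl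
  have hterm : ∀ l : List ℕ,
      (∫⁻ ω, S.indicator (fun _ => (1:ℝ≥0∞)) ω
          * (if l ∈ L then TlE R p₀ List.nil l ω * YlE R p₀ Q l ω else 0) ∂P)
        = ∫⁻ ω, S.indicator (fun _ => (1:ℝ≥0∞)) ω
          * (if l ∈ L then TlE R p₀ List.nil l ω else 0) ∂P := by
    intro l
    by_cases hl : l ∈ L
    · simp only [if_pos hl]
      have e : ∀ ω, S.indicator (fun _ => (1:ℝ≥0∞)) ω
          * (TlE R p₀ List.nil l ω * YlE R p₀ Q l ω)
            = (fun ω => S.indicator (fun _ => (1:ℝ≥0∞)) ω * TlE R p₀ List.nil l ω) ω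
              * YlE R p₀ Q l ω := fun ω => (mul_assoc _ _ _).symm
      rw [lintegral_congr e,
        lintegral_mul_eq_lintegral_mul_lintegral_of_independent_measurableSpace hMf_le hMg_le
          hindep (by exact hmeas_ind.mul (hxiE_meas l hl) : Measurable[lineSigma R L] fun ω => S.indicator (fun _ => (1:ℝ≥0∞)) ω * TlE R p₀ List.nil l ω) (hYl_meas l hl),
        hYl l hl, mul_one]
    · simp only [if_neg hl, mul_zero]
  have hmeasQ : ∀ l : List ℕ, AEMeasurable (fun ω => S.indicator (fun _ => (1:ℝ≥0∞)) ω
      * (if l ∈ L then TlE R p₀ List.nil l ω * YlE R p₀ Q l ω else 0)) P := by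
    intro l
    have hind : Measurable (S.indicator (fun _ : Ω => (1:ℝ≥0∞))) :=
      measurable_const.indicator (hMf_le S hS)
    by_cases hl : l ∈ L
    · simp only [if_pos hl]
      exact (hind.mul ((measurable_TlE hRmeas hp _ _).mul
        (measurable_YlE hRmeas hp Q l))).aemeasurable
    · simp only [if_neg hl, mul_zero]; exact aemeasurable_const
  have hmeasL : ∀ l : List ℕ, AEMeasurable (fun ω => S.indicator (fun _ => (1:ℝ≥0∞)) ω
      * (if l ∈ L then TlE R p₀ List.nil l ω else 0)) P := by
    intro l
    have hind : Measurable (S.indicator (fun _ : Ω => (1:ℝ≥0∞))) :=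
      measurable_const.indicator (hMf_le S hS)
    by_cases hl : l ∈ L
    · simp only [if_pos hl]
      exact (hind.mul (measurable_TlE hRmeas hp _ _)).aemeasurable
    · simp only [if_neg hl, mul_zero]; exact aemeasurable_const
  calc ∫⁻ ω, S.indicator (fun _ => (1:ℝ≥0∞)) ω
        * (∑' u : List ℕ, if u ∈ Q then TlE R p₀ List.nil u ω else 0) ∂P
      = ∫⁻ ω, ∑' l : List ℕ, S.indicator (fun _ => (1:ℝ≥0∞)) ω
          * (if l ∈ L then TlE R p₀ List.nil l ω * YlE R p₀ Q l ω else 0) ∂P := by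
        refine lintegral_congr fun ω => ?_
        rw [Q_decomp hL hcov ω, ENNReal.tsum_mul_left]
    _ = ∑' l : List ℕ, ∫⁻ ω, S.indicator (fun _ => (1:ℝ≥0∞)) ω
          * (if l ∈ L then TlE R p₀ List.nil l ω * YlE R p₀ Q l ω else 0) ∂P :=
        lintegral_tsum hmeasQ
    _ = ∑' l : List ℕ, ∫⁻ ω, S.indicator (fun _ => (1:ℝ≥0∞)) ω
          * (if l ∈ L then TlE R p₀ List.nil l ω else 0) ∂P := tsum_congr hterm
    _ = ∫⁻ ω, ∑' l : List ℕ, S.indicator (fun _ => (1:ℝ≥0∞)) ω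
          * (if l ∈ L then TlE R p₀ List.nil l ω else 0) ∂P := (lintegral_tsum hmeasL).symm
    _ = ∫⁻ ω, S.indicator (fun _ => (1:ℝ≥0∞)) ω
          * (∑' u : List ℕ, if u ∈ L then TlE R p₀ List.nil u ω else 0) ∂P :=
        lintegral_congr fun ω => ENNReal.tsum_mul_left

end Stmt14

end Stmt14Key
section Stmt14Final

open MeasureTheory ProbabilityTheory
open scoped ENNReal Classical

namespace Stmt14

variable {Ω : Type*} [mΩ : MeasurableSpace Ω] {P : Measure Ω} [IsProbabilityMeasure P]
  {ν : Measure PMSeq} [IsProbabilityMeasure ν]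
  {R : List ℕ → Ω → ℕ → ℝ} {p₀ : ℝ}

lemma measurable_xiE_line (hRmeas : ∀ u, Measurable (R u)) (hp : 0 ≤ p₀)
    {L : Set (List ℕ)} {l : List ℕ} (hl : l ∈ L) :
    Measurable[lineSigma R L] (TlE R p₀ List.nil l) := by
  refine measurable_TlE_sup hRmeas hp ?_
  intro k hk
  refine ⟨l, hl, ?_, ?_⟩
  · rw [List.nil_append]; exact List.take_prefix k l
  · intro h
    have hlen := congrArg List.length h
    rw [List.nil_append, List.length_take] at hlen
    omega

lemma term_eq (u : List ℕ) (ω : Ω) (hω : ∀ v i, 0 ≤ R v ω i) :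
    (if xi R 1 u ω = 0 then 0 else xi R 1 u ω ^ p₀) = (TlE R p₀ List.nil u ω).toReal := by
  have hxi : xi R 1 u ω = ∏ k ∈ Finset.range u.length, R (u.take k) ω (u.getD k 0) := by
    rw [xi, one_mul]
  by_cases h : ∃ k ∈ Finset.range u.length, R (u.take k) ω (u.getD k 0) = 0
  · obtain ⟨k, hk, hk0⟩ := h
    rw [if_pos (by rw [hxi]; exact Finset.prod_eq_zero hk hk0)]
    have hz : TlE R p₀ List.nil u ω = 0 := by
      refine Finset.prod_eq_zero hk ?_
      show phi p₀ (R (List.nil ++ u.take k) ω (u.getD k 0)) = 0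
      rw [List.nil_append, hk0]
      simp [phi]
    rw [hz]
    simp
  · push_neg at h
    have hne : xi R 1 u ω ≠ 0 := by
      rw [hxi]; exact Finset.prod_ne_zero_iff.mpr h
    rw [if_neg hne, hxi, ← Real.finset_prod_rpow _ _ (fun k _ => hω _ _) p₀]
    rw [TlE, ENNReal.toReal_prod]
    refine Finset.prod_congr rfl fun k hk => ?_
    rw [List.nil_append]
    simp only [phi]
    rw [if_neg (h k hk), ENNReal.toReal_ofReal (Real.rpow_nonneg (hω _ _) _)]

lemma lineSum_eq_toReal (T : Set (List ℕ)) (ω : Ω) (hω : ∀ v i, 0 ≤ R v ω i) :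
    lineSum R p₀ T ω
      = (∑' u : List ℕ, if u ∈ T then TlE R p₀ List.nil u ω else 0).toReal := by
  have h1 : (∑' u : List ℕ, if u ∈ T then TlE R p₀ List.nil u ω else 0)
      = ∑' u : T, TlE R p₀ List.nil (u : List ℕ) ω := by
    rw [tsum_subtype T (fun u => TlE R p₀ List.nil u ω)]
    exact tsum_congr fun u => by rw [Set.indicator_apply]
  rw [h1, ENNReal.tsum_toReal_eq (fun u => TlE_ne_top _ _ _), lineSum]
  exact tsum_congr fun u => term_eq (u : List ℕ) ω hω

end Stmt14

end Stmt14Final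
/-- Under the Malthusian hypotheses and `m = ∫ #s ν(ds) < ∞`,
if the line `Q` covers the line `L` and has finite maximal generation, then
`E[M_Q | H_L] = M_L` almost surely. -/
theorem stmt14 {Ω : Type*} [MeasurableSpace Ω] (P : Measure Ω) [IsProbabilityMeasure P]
    (ν : Measure PMSeq) [IsProbabilityMeasure ν] (hν : ∀ᵐ s ∂ν, IsPointSeq s)
    (R : List ℕ → Ω → ℕ → ℝ) (hRmeas : ∀ u, Measurable (R u))
    (hRindep : iIndepFun R P)
    (hRdist : ∀ u, Measure.map (R u) P = ν)
    (p₀ : ℝ) (hmal : MalthusHyp ν p₀)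
    (hm : ∫⁻ s, (numAtoms s : ℝ≥0∞) ∂ν < ⊤)
    (L Q : Set (List ℕ)) (hL : IsLine L) (hQ : IsLine Q)
    (hcov : Covers L Q) (hfin : ∃ N : ℕ, ∀ u ∈ Q, u.length ≤ N) :
    P[lineSum R p₀ Q | lineSigma R L] =ᵐ[P] lineSum R p₀ L := by
  classical
  obtain ⟨⟨hdom, hLam, hmin⟩, hp₀pos, hex1, hex2⟩ := hmal
  have hp : 0 ≤ p₀ := le_of_lt hp₀pos
  obtain ⟨N, hN⟩ := hfin
  have hm_le : lineSigma R L ≤ (inferInstance : MeasurableSpace Ω) :=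
    iSup₂_le fun v _ => (hRmeas v).comap_le
  have haW : (∑' i, Stmt14.aW ν p₀ i) = 1 := Stmt14.tsum_aW hp hLam
  -- lengths of members of L are bounded by N
  have hLlen : ∀ l ∈ L, l.length ≤ N := by
    intro l hl
    rcases hcov.2 l ⟨l, hl, List.prefix_rfl⟩ with ⟨q, hq, hpre⟩ | ⟨q, hq, hpre⟩
    · obtain ⟨l', hl', hpre'⟩ := hcov.1 q hq
      have h1 : l' = l := hL l' hl' l hl (hpre'.trans hpre)
      subst h1
      exact le_trans hpre'.length_le (hN q hq)
    · exact le_trans hpre.length_le (hN q hq)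
  -- ambient measurability of the ENNReal-valued masses
  have hmeasNL : Measurable
      (fun ω => ∑' u : List ℕ, if u ∈ L then Stmt14.TlE R p₀ List.nil u ω else 0) := by
    refine Measurable.ennreal_tsum fun u => ?_
    by_cases hu : u ∈ L
    · simp only [if_pos hu]; exact Stmt14.measurable_TlE hRmeas hp _ _
    · simp only [if_neg hu]; exact measurable_const
  have hmeasNQ : Measurable
      (fun ω => ∑' u : List ℕ, if u ∈ Q then Stmt14.TlE R p₀ List.nil u ω else 0) := by
    refine Measurable.ennreal_tsum fun u => ?_
    by_cases hu : u ∈ Q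
    · simp only [if_pos hu]; exact Stmt14.measurable_TlE hRmeas hp _ _
    · simp only [if_neg hu]; exact measurable_const
  -- the L-mass has finite expectation
  have hNLlint : (∫⁻ ω, (∑' u : List ℕ,
      if u ∈ L then Stmt14.TlE R p₀ List.nil u ω else 0) ∂P) ≤ (N : ℝ≥0∞) + 1 := by
    have hmeas' : ∀ u : List ℕ,
        AEMeasurable (fun ω => if u ∈ L then Stmt14.TlE R p₀ List.nil u ω else 0) P := by
      intro u
      by_cases hu : u ∈ L
      · simp only [if_pos hu]; exact (Stmt14.measurable_TlE hRmeas hp _ _).aemeasurable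
      · simp only [if_neg hu]; exact aemeasurable_const
    rw [lintegral_tsum hmeas']
    have h : ∀ u : List ℕ,
        (∫⁻ ω, (if u ∈ L then Stmt14.TlE R p₀ List.nil u ω else 0) ∂P)
          = (if u ∈ L then Stmt14.wA (Stmt14.aW ν p₀) u else 0) := by
      intro u
      by_cases hu : u ∈ L
      · simp only [if_pos hu]
        exact Stmt14.lintegral_TlE hRmeas hRindep hRdist hp u List.nil
      · simp only [if_neg hu, lintegral_zero]
    rw [tsum_congr h]
    exact Stmt14.line_sum_le haW L N hLlen
  -- set-integral identity
  have hkey : ∀ S : Set Ω, MeasurableSet[lineSigma R L] S →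
      (∫⁻ ω in S, (∑' u : List ℕ,
          if u ∈ Q then Stmt14.TlE R p₀ List.nil u ω else 0) ∂P)
        = ∫⁻ ω in S, (∑' u : List ℕ,
          if u ∈ L then Stmt14.TlE R p₀ List.nil u ω else 0) ∂P := by
    intro S hS
    have h := Stmt14.key_lintegral hRmeas hRindep hRdist hp hLam hL hQ hcov hN hS
    have h1 : (∫⁻ ω in S, (∑' u : List ℕ,
        if u ∈ Q then Stmt14.TlE R p₀ List.nil u ω else 0) ∂P)
          = ∫⁻ ω, S.indicator (fun _ => (1:ℝ≥0∞)) ω * (∑' u : List ℕ,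
            if u ∈ Q then Stmt14.TlE R p₀ List.nil u ω else 0) ∂P := by
      rw [← lintegral_indicator (hm_le S hS)]
      refine lintegral_congr fun ω => ?_
      by_cases hω : ω ∈ S <;> simp [hω]
    have h2 : (∫⁻ ω in S, (∑' u : List ℕ,
        if u ∈ L then Stmt14.TlE R p₀ List.nil u ω else 0) ∂P)
          = ∫⁻ ω, S.indicator (fun _ => (1:ℝ≥0∞)) ω * (∑' u : List ℕ,
            if u ∈ L then Stmt14.TlE R p₀ List.nil u ω else 0) ∂P := by
      rw [← lintegral_indicator (hm_le S hS)]
      refine lintegral_congr fun ω => ?_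
      by_cases hω : ω ∈ S <;> simp [hω]
    rw [h1, h2, h]
  have hNQNL : (∫⁻ ω, (∑' u : List ℕ,
      if u ∈ Q then Stmt14.TlE R p₀ List.nil u ω else 0) ∂P)
        = ∫⁻ ω, (∑' u : List ℕ,
      if u ∈ L then Stmt14.TlE R p₀ List.nil u ω else 0) ∂P := by
    have h := hkey Set.univ MeasurableSet.univ
    simpa [Measure.restrict_univ] using h
  have htop : ((N : ℝ≥0∞) + 1) ≠ ⊤ := by simp
  have hNLne : (∫⁻ ω, (∑' u : List ℕ,
      if u ∈ L then Stmt14.TlE R p₀ List.nil u ω else 0) ∂P) ≠ ⊤ :=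
    ne_top_of_le_ne_top htop hNLlint
  have hNQne : (∫⁻ ω, (∑' u : List ℕ,
      if u ∈ Q then Stmt14.TlE R p₀ List.nil u ω else 0) ∂P) ≠ ⊤ := by
    rw [hNQNL]; exact hNLne
  -- the good event: all marks are nonnegative
  have hgood : ∀ᵐ ω ∂P, ∀ v : List ℕ, ∀ i : ℕ, 0 ≤ R v ω i := by
    rw [ae_all_iff]
    intro v
    have h1 : ∀ᵐ y ∂(Measure.map (R v) P), ∀ i : ℕ, 0 ≤ y i := by
      rw [hRdist v]
      filter_upwards [hν] with s hs
      exact hs.1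
    exact ae_of_ae_map (hRmeas v).aemeasurable h1
  have hQae : lineSum R p₀ Q =ᵐ[P] fun ω => (∑' u : List ℕ,
      if u ∈ Q then Stmt14.TlE R p₀ List.nil u ω else 0).toReal := by
    filter_upwards [hgood] with ω hω
    exact Stmt14.lineSum_eq_toReal Q ω hω
  have hLae : lineSum R p₀ L =ᵐ[P] fun ω => (∑' u : List ℕ,
      if u ∈ L then Stmt14.TlE R p₀ List.nil u ω else 0).toReal := by
    filter_upwards [hgood] with ω hω
    exact Stmt14.lineSum_eq_toReal L ω hω
  have hIntL : Integrable (fun ω => (∑' u : List ℕ,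
      if u ∈ L then Stmt14.TlE R p₀ List.nil u ω else 0).toReal) P :=
    integrable_toReal_of_lintegral_ne_top hmeasNL.aemeasurable hNLne
  have hIntQ : Integrable (fun ω => (∑' u : List ℕ,
      if u ∈ Q then Stmt14.TlE R p₀ List.nil u ω else 0).toReal) P :=
    integrable_toReal_of_lintegral_ne_top hmeasNQ.aemeasurable hNQne
  have hgInt : Integrable (lineSum R p₀ L) P := hIntL.congr hLae.symm
  have hfInt : Integrable (lineSum R p₀ Q) P := hIntQ.congr hQae.symm
  haveI : SigmaFinite (P.trim hm_le) := by
    haveI := MeasureTheory.isFiniteMeasure_trim (μ := P) hm_le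
    infer_instance
  refine (ae_eq_condExp_of_forall_setIntegral_eq hm_le hfInt ?_ ?_ ?_).symm
  · intro s hs hμs
    exact hgInt.integrableOn
  · intro s hs hμs
    have e1 : ∫ ω in s, lineSum R p₀ L ω ∂P = (∫⁻ ω in s, (∑' u : List ℕ,
        if u ∈ L then Stmt14.TlE R p₀ List.nil u ω else 0) ∂P).toReal := by
      rw [integral_congr_ae (ae_restrict_of_ae hLae)]
      exact integral_toReal hmeasNL.aemeasurable.restrict
        (ae_restrict_of_ae (ae_lt_top hmeasNL hNLne))
    have e2 : ∫ ω in s, lineSum R p₀ Q ω ∂P = (∫⁻ ω in s, (∑' u : List ℕ,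
        if u ∈ Q then Stmt14.TlE R p₀ List.nil u ω else 0) ∂P).toReal := by
      rw [integral_congr_ae (ae_restrict_of_ae hQae)]
      exact integral_toReal hmeasNQ.aemeasurable.restrict
        (ae_restrict_of_ae (ae_lt_top hmeasNQ hNQne))
    rw [e1, e2, hkey s hs]
  · refine ⟨fun ω => (∑' u : List ℕ,
      if u ∈ L then Stmt14.TlE R p₀ List.nil u ω else 0).toReal, ?_, hLae⟩
    refine Measurable.stronglyMeasurable ?_
    refine ENNReal.measurable_toReal.comp ?_
    refine Measurable.ennreal_tsum fun u => ?_
    by_cases hu : u ∈ L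
    · simp only [if_pos hu]
      exact Stmt14.measurable_xiE_line hRmeas hp hu
    · simp only [if_neg hu]
      exact measurable_const
end
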